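/- arXiv:1104.4285 — 9 statements merged into one kernel-verified Lean document; each statement's English description precedes it below -/
import Mathlib

section
/- Let ℒ, 𝒵, ℳ be nonempty finite sets, let P_{LZ} be a joint probability distribution on ℒ × 𝒵, and let (𝓕, μ) be a two-universal family of hash functions from ℒ to ℳ. For f ∈ 𝓕 define the joint distribution q_f on ℳ × 𝒵 by q_f(m, z) = ∑_{ℓ : f(ℓ) = m} P_{LZ}(ℓ, z), and write P_Z(z) = ∑_ℓ P_{LZ}(ℓ, z). Then for every ρ with 0 < ρ ≤ 1, ∑_{f ∈ 𝓕} μ(f) · exp(ρ · I(q_f)) ≤ 1 + |ℳ|^ρ · ∑_{(ℓ,z) : P_Z(z) > 0} P_{LZ}(ℓ, z) · (P_{LZ}(ℓ, z) / P_Z(z))^ρ. -/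
open Finset

/-- Mutual information of a joint distribution `q` on `A × B` (natural logarithm);
terms with `q (a, b) = 0` contribute `0` since `0 * log _ = 0`. -/
noncomputable def mutInfo {A B : Type*} [Fintype A] [Fintype B] (q : A × B → ℝ) : ℝ :=
  ∑ p : A × B, q p * Real.log (q p / ((∑ b, q (p.1, b)) * (∑ a, q (a, p.2))))


lemma pa_sum_pos {ι : Type*} [Fintype ι] (w Y : ι → ℝ)
    (hw : ∀ i, 0 ≤ w i) (hw1 : ∑ i, w i = 1)
    (hpos : ∀ i, 0 < w i → 0 < Y i) :
    0 < ∑ i, w i * Y i := by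
  have hwY : ∀ i, 0 ≤ w i * Y i := fun i => by
    rcases (hw i).eq_or_lt with h | h
    · simp [← h]
    · exact (mul_pos h (hpos i h)).le
  obtain ⟨j, hj⟩ : ∃ j, 0 < w j := by
    by_contra h
    push_neg at h
    have h0 : ∑ i, w i = 0 := Finset.sum_eq_zero fun i _ => le_antisymm (h i) (hw i)
    rw [h0] at hw1; norm_num at hw1
  exact lt_of_lt_of_le (mul_pos hj (hpos j hj))
    (Finset.single_le_sum (fun i _ => hwY i) (Finset.mem_univ j))

lemma pa_gibbs {ι : Type*} [Fintype ι] (w Y : ι → ℝ)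
    (hw : ∀ i, 0 ≤ w i) (hw1 : ∑ i, w i = 1)
    (hpos : ∀ i, 0 < w i → 0 < Y i) :
    ∑ i, w i * Real.log (Y i) ≤ Real.log (∑ i, w i * Y i) := by
  have hcpos : 0 < ∑ i, w i * Y i := pa_sum_pos w Y hw hw1 hpos
  set c := ∑ i, w i * Y i with hc
  have step : ∀ i, w i * Real.log (Y i) ≤ w i * Real.log c + (w i * Y i / c - w i) := by
    intro i
    rcases (hw i).eq_or_lt with h | h
    · simp [← h]
    · have hYi := hpos i h
      have h1 : Real.log (Y i / c) ≤ Y i / c - 1 := Real.log_le_sub_one_of_pos (div_pos hYi hcpos)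
      rw [Real.log_div hYi.ne' hcpos.ne'] at h1
      have h2 : w i * (Real.log (Y i) - Real.log c) ≤ w i * (Y i / c - 1) :=
        mul_le_mul_of_nonneg_left h1 h.le
      rw [mul_sub, mul_sub, mul_one, mul_div_assoc'] at h2
      linarith
  calc ∑ i, w i * Real.log (Y i)
      ≤ ∑ i, (w i * Real.log c + (w i * Y i / c - w i)) := Finset.sum_le_sum fun i _ => step i
    _ = (∑ i, w i) * Real.log c + ((∑ i, w i * Y i) / c - ∑ i, w i) := by
        rw [Finset.sum_add_distrib, Finset.sum_sub_distrib, ← Finset.sum_mul, ← Finset.sum_div]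
    _ = Real.log c := by rw [hw1, ← hc, div_self hcpos.ne']; ring

lemma pa_gibbs_exp {ι : Type*} [Fintype ι] (w Y : ι → ℝ)
    (hw : ∀ i, 0 ≤ w i) (hw1 : ∑ i, w i = 1)
    (hpos : ∀ i, 0 < w i → 0 < Y i) :
    Real.exp (∑ i, w i * Real.log (Y i)) ≤ ∑ i, w i * Y i := by
  calc Real.exp (∑ i, w i * Real.log (Y i))
      ≤ Real.exp (Real.log (∑ i, w i * Y i)) :=
        Real.exp_le_exp.mpr (pa_gibbs w Y hw hw1 hpos)
    _ = ∑ i, w i * Y i := Real.exp_log (pa_sum_pos w Y hw hw1 hpos)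

lemma pa_rpow_add_le {a b : ℝ} (ha : 0 ≤ a) (hb : 0 ≤ b) {p : ℝ} (hp : 0 ≤ p) (hp1 : p ≤ 1) :
    (a + b) ^ p ≤ a ^ p + b ^ p := by
  have h := NNReal.rpow_add_le_add_rpow a.toNNReal b.toNNReal hp hp1
  have h2 := NNReal.coe_le_coe.mpr h
  push_cast at h2
  rwa [Real.coe_toNNReal _ ha, Real.coe_toNNReal _ hb] at h2

lemma pa_sum_rpow_le {ι : Type*} [Fintype ι] (w x : ι → ℝ)
    (hw : ∀ i, 0 ≤ w i) (hw1 : ∑ i, w i = 1) (hx : ∀ i, 0 ≤ x i)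
    {p : ℝ} (hp : 0 ≤ p) (hp1 : p ≤ 1) :
    ∑ i, w i * x i ^ p ≤ (∑ i, w i * x i) ^ p := by
  have h := (Real.concaveOn_rpow hp hp1).le_map_sum (fun i _ => hw i) hw1
    (fun i _ => Set.mem_Ici.mpr (hx i))
  simpa using h

set_option maxHeartbeats 1000000 in
/-- Privacy amplification theorem: for a two-universal family `(𝓕, μ)` of hash functions
from `L` to `M` and a joint distribution `P_{LZ}` on `L × Z`,
`∑_f μ(f) exp(ρ I(q_f)) ≤ 1 + |M|^ρ ∑_{ℓ,z : P_Z(z)>0} P_{LZ}(ℓ,z) (P_{LZ}(ℓ,z)/P_Z(z))^ρ`. -/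
theorem privacy_amplification
    {L Z M F : Type*} [Fintype L] [Fintype Z] [Fintype M] [Fintype F]
    [Nonempty L] [Nonempty Z] [Nonempty M] [Nonempty F] [DecidableEq M]
    (PLZ : L × Z → ℝ)
    (hPnn : ∀ p, 0 ≤ PLZ p) (hPsum : ∑ p, PLZ p = 1)
    (hash : F → L → M) (μ : F → ℝ)
    (hμnn : ∀ f, 0 ≤ μ f) (hμsum : ∑ f, μ f = 1)
    (h2u : ∀ x₁ x₂ : L, x₁ ≠ x₂ →
      ∑ f ∈ univ.filter (fun f => hash f x₁ = hash f x₂), μ f ≤ 1 / (Fintype.card M : ℝ))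
    (PZ : Z → ℝ) (hPZ : ∀ z, PZ z = ∑ ℓ, PLZ (ℓ, z))
    (q : F → M × Z → ℝ)
    (hq : ∀ f m z, q f (m, z) = ∑ ℓ ∈ univ.filter (fun ℓ => hash f ℓ = m), PLZ (ℓ, z))
    (ρ : ℝ) (hρ0 : 0 < ρ) (hρ1 : ρ ≤ 1) :
    ∑ f, μ f * Real.exp (ρ * mutInfo (q f)) ≤
      1 + (Fintype.card M : ℝ) ^ ρ *
        ∑ p ∈ univ.filter (fun p : L × Z => 0 < PZ p.2),
          PLZ p * (PLZ p / PZ p.2) ^ ρ := by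
  classical
  set cM : ℝ := (Fintype.card M : ℝ) with hcMdef
  have hcM : 0 < cM := by
    have := Fintype.card_pos (α := M)
    rw [hcMdef]; exact_mod_cast this
  have hPZnn : ∀ z, 0 ≤ PZ z := fun z => by
    rw [hPZ]; exact Finset.sum_nonneg fun ℓ _ => hPnn _
  have hPle : ∀ p : L × Z, PLZ p ≤ PZ p.2 := fun p => by
    rw [hPZ]
    exact Finset.single_le_sum (fun ℓ' _ => hPnn (ℓ', p.2)) (Finset.mem_univ p.1)
  have hqnn : ∀ f (p : M × Z), 0 ≤ q f p := fun f p => by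
    rw [show p = (p.1, p.2) from rfl, hq]
    exact Finset.sum_nonneg fun ℓ _ => hPnn _
  have hmarg : ∀ f z, ∑ m, q f (m, z) = PZ z := by
    intro f z
    rw [hPZ]
    simp only [hq]
    exact Finset.sum_fiberwise univ (hash f) (fun ℓ => PLZ (ℓ, z))
  have hq1 : ∀ f, ∑ p : M × Z, q f p = 1 := by
    intro f
    calc ∑ p : M × Z, q f p = ∑ z, ∑ m, q f (m, z) := Fintype.sum_prod_type_right _
      _ = ∑ z, ∑ ℓ, PLZ (ℓ, z) := by
          refine Finset.sum_congr rfl fun z _ => ?_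
          rw [hmarg f z, hPZ]
      _ = 1 := by rw [← hPsum, Fintype.sum_prod_type_right]
  -- the key quantities
  set S : F → ℝ := fun f => ∑ p : M × Z, q f p * (q f p / PZ p.2) ^ ρ with hSdef
  set R : ℝ := ∑ p : L × Z, PLZ p * (PLZ p / PZ p.2) ^ ρ with hRdef
  set T : F → Z → L → ℝ := fun f z ℓ =>
    ∑ ℓ' ∈ univ.erase ℓ, if hash f ℓ' = hash f ℓ then PLZ (ℓ', z) else 0 with hTdef
  have hTnn : ∀ f z ℓ, 0 ≤ T f z ℓ := fun f z ℓ =>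
    Finset.sum_nonneg fun ℓ' _ => by split <;> [exact hPnn _; exact le_rfl]
  -- Step 1: exp (ρ I(q f)) ≤ |M|^ρ * S f
  have key1 : ∀ f, Real.exp (ρ * mutInfo (q f)) ≤ cM ^ ρ * S f := by
    intro f
    set qM : M → ℝ := fun m => ∑ z, q f (m, z) with hqMdef
    have hqMnn : ∀ m, 0 ≤ qM m := fun m => Finset.sum_nonneg fun z _ => hqnn f (m, z)
    have hqM1 : ∑ m, qM m = 1 := by rw [← hq1 f, Fintype.sum_prod_type]
    set Yinv : M → ℝ := fun m => if qM m = 0 then 1 else (qM m)⁻¹ with hYinvdef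
    have hPZpos : ∀ p : M × Z, 0 < q f p → 0 < PZ p.2 := by
      intro p hp
      rw [← hmarg f p.2]
      exact lt_of_lt_of_le hp (Finset.single_le_sum (fun m _ => hqnn f (m, p.2)) (Finset.mem_univ p.1))
    have hsplit : mutInfo (q f) =
        (∑ m, qM m * Real.log (Yinv m)) + ∑ p : M × Z, q f p * Real.log (q f p / PZ p.2) := by
      have h1 : mutInfo (q f) =
          ∑ p : M × Z, (q f p * Real.log (Yinv p.1) + q f p * Real.log (q f p / PZ p.2)) := by
        unfold mutInfo
        refine Finset.sum_congr rfl fun p _ => ?_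
        rw [hmarg f p.2]
        rcases (hqnn f p).eq_or_lt with h | h
        · simp [← h]
        · have hqM : 0 < qM p.1 :=
            lt_of_lt_of_le h (Finset.single_le_sum (fun z _ => hqnn f (p.1, z)) (Finset.mem_univ p.2))
          have hPZp : 0 < PZ p.2 := hPZpos p h
          rw [show Yinv p.1 = (qM p.1)⁻¹ from if_neg hqM.ne']
          rw [← mul_add]
          congr 1
          rw [show (∑ b, q f (p.1, b)) = qM p.1 from rfl]
          rw [Real.log_div h.ne' (mul_pos hqM hPZp).ne', Real.log_mul hqM.ne' hPZp.ne',
            Real.log_inv, Real.log_div h.ne' hPZp.ne']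
          ring
      rw [h1, Finset.sum_add_distrib]
      congr 1
      rw [Fintype.sum_prod_type]
      refine Finset.sum_congr rfl fun m _ => ?_
      show ∑ y : Z, q f (m, y) * Real.log (Yinv m) = qM m * Real.log (Yinv m)
      rw [← Finset.sum_mul]
    have hYinvpos : ∀ m, 0 < qM m → 0 < Yinv m := by
      intro m hm
      rw [show Yinv m = (qM m)⁻¹ from if_neg hm.ne']
      exact inv_pos.mpr hm
    have hHM : Real.exp (ρ * ∑ m, qM m * Real.log (Yinv m)) ≤ cM ^ ρ := by
      have h1 := pa_gibbs qM Yinv hqMnn hqM1 hYinvpos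
      have h2 : ∑ m, qM m * Yinv m ≤ cM := by
        calc ∑ m, qM m * Yinv m ≤ ∑ _m : M, (1 : ℝ) := by
              refine Finset.sum_le_sum fun m _ => ?_
              by_cases h : qM m = 0
              · simp [hYinvdef, h]
              · rw [show Yinv m = (qM m)⁻¹ from if_neg h, mul_inv_cancel₀ h]
          _ = cM := by simp [hcMdef]
      have h3 : 0 < ∑ m, qM m * Yinv m := pa_sum_pos qM Yinv hqMnn hqM1 hYinvpos
      have h4 : ∑ m, qM m * Real.log (Yinv m) ≤ Real.log cM :=
        h1.trans (Real.log_le_log h3 h2)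
      calc Real.exp (ρ * ∑ m, qM m * Real.log (Yinv m))
          ≤ Real.exp (ρ * Real.log cM) :=
            Real.exp_le_exp.mpr (mul_le_mul_of_nonneg_left h4 hρ0.le)
        _ = cM ^ ρ := by rw [Real.rpow_def_of_pos hcM, mul_comm]
    have hHB : Real.exp (ρ * ∑ p : M × Z, q f p * Real.log (q f p / PZ p.2)) ≤ S f := by
      have heq : ρ * ∑ p : M × Z, q f p * Real.log (q f p / PZ p.2)
          = ∑ p : M × Z, q f p * Real.log ((q f p / PZ p.2) ^ ρ) := by
        rw [Finset.mul_sum]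
        refine Finset.sum_congr rfl fun p _ => ?_
        rcases (hqnn f p).eq_or_lt with h | h
        · simp [← h]
        · rw [Real.log_rpow (div_pos h (hPZpos p h))]
          ring
      rw [hSdef, heq]
      exact pa_gibbs_exp (fun p => q f p) (fun p => (q f p / PZ p.2) ^ ρ) (hqnn f) (hq1 f)
        (fun p hp => Real.rpow_pos_of_pos (div_pos hp (hPZpos p hp)) ρ)
    calc Real.exp (ρ * mutInfo (q f))
        = Real.exp (ρ * ∑ m, qM m * Real.log (Yinv m)) *
          Real.exp (ρ * ∑ p : M × Z, q f p * Real.log (q f p / PZ p.2)) := by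
          rw [hsplit, mul_add, Real.exp_add]
      _ ≤ cM ^ ρ * S f := by
          refine mul_le_mul hHM hHB (Real.exp_pos _).le (Real.rpow_nonneg hcM.le ρ)
  -- Step 2a: the two-universal hash bound per (z, ℓ)
  have hTbound : ∀ z ℓ, ∑ f, μ f * (T f z ℓ / PZ z) ^ ρ ≤ cM ^ (-ρ) := by
    intro z ℓ
    by_cases hPZz : 0 < PZ z
    · have h1 : ∑ f, μ f * (T f z ℓ / PZ z) ^ ρ ≤ (∑ f, μ f * (T f z ℓ / PZ z)) ^ ρ :=
        pa_sum_rpow_le _ _ hμnn hμsum (fun f => div_nonneg (hTnn f z ℓ) hPZz.le) hρ0.le hρ1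
      have h2 : ∑ f, μ f * T f z ℓ ≤ PZ z / cM := by
        calc ∑ f, μ f * T f z ℓ
            = ∑ ℓ' ∈ univ.erase ℓ, ∑ f, μ f * (if hash f ℓ' = hash f ℓ then PLZ (ℓ', z) else 0) := by
              simp_rw [hTdef, Finset.mul_sum]
              exact Finset.sum_comm
          _ = ∑ ℓ' ∈ univ.erase ℓ,
              (∑ f ∈ univ.filter (fun f => hash f ℓ' = hash f ℓ), μ f) * PLZ (ℓ', z) := by
              refine Finset.sum_congr rfl fun ℓ' _ => ?_
              rw [Finset.sum_mul, Finset.sum_filter]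
              refine Finset.sum_congr rfl fun f _ => ?_
              split <;> ring
          _ ≤ ∑ ℓ' ∈ univ.erase ℓ, (1 / cM) * PLZ (ℓ', z) := by
              refine Finset.sum_le_sum fun ℓ' hℓ' => ?_
              exact mul_le_mul_of_nonneg_right (h2u ℓ' ℓ (Finset.ne_of_mem_erase hℓ')) (hPnn _)
          _ ≤ (1 / cM) * PZ z := by
              rw [← Finset.mul_sum]
              refine mul_le_mul_of_nonneg_left ?_ (by positivity)
              rw [hPZ]
              exact Finset.sum_le_sum_of_subset_of_nonneg (Finset.subset_univ _)
                (fun ℓ' _ _ => hPnn _)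
          _ = PZ z / cM := by ring
      have h3 : ∑ f, μ f * (T f z ℓ / PZ z) ≤ 1 / cM := by
        have : ∑ f, μ f * (T f z ℓ / PZ z) = (∑ f, μ f * T f z ℓ) / PZ z := by
          rw [Finset.sum_div]
          exact Finset.sum_congr rfl fun f _ => by ring
        rw [this]
        calc (∑ f, μ f * T f z ℓ) / PZ z ≤ (PZ z / cM) / PZ z :=
              div_le_div_of_nonneg_right h2 hPZz.le
          _ = 1 / cM := by rw [div_div, mul_comm, ← div_div, div_self hPZz.ne']
      calc ∑ f, μ f * (T f z ℓ / PZ z) ^ ρ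
          ≤ (∑ f, μ f * (T f z ℓ / PZ z)) ^ ρ := h1
        _ ≤ (1 / cM) ^ ρ := by
            refine Real.rpow_le_rpow ?_ h3 hρ0.le
            exact Finset.sum_nonneg fun f _ =>
              mul_nonneg (hμnn f) (div_nonneg (hTnn f z ℓ) hPZz.le)
        _ = cM ^ (-ρ) := by
            rw [one_div, Real.inv_rpow hcM.le, Real.rpow_neg hcM.le]
    · have hPZ0 : PZ z = 0 := le_antisymm (not_lt.mp hPZz) (hPZnn z)
      have : ∀ f, μ f * (T f z ℓ / PZ z) ^ ρ = 0 := by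
        intro f
        rw [hPZ0, div_zero, Real.zero_rpow hρ0.ne', mul_zero]
      rw [Finset.sum_eq_zero fun f _ => this f]
      positivity
  -- Step 2b: S f ≤ R + remainder
  have hSbound : ∀ f, S f ≤ R + ∑ p : L × Z, PLZ p * (T f p.2 p.1 / PZ p.2) ^ ρ := by
    intro f
    have hrw : S f = ∑ p : L × Z, PLZ p * (q f (hash f p.1, p.2) / PZ p.2) ^ ρ := by
      rw [hSdef]
      calc ∑ p : M × Z, q f p * (q f p / PZ p.2) ^ ρ
          = ∑ z, ∑ m, q f (m, z) * (q f (m, z) / PZ z) ^ ρ := Fintype.sum_prod_type_right _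
        _ = ∑ z, ∑ ℓ, PLZ (ℓ, z) * (q f (hash f ℓ, z) / PZ z) ^ ρ := by
            refine Finset.sum_congr rfl fun z _ => ?_
            calc ∑ m, q f (m, z) * (q f (m, z) / PZ z) ^ ρ
                = ∑ m, ∑ ℓ ∈ univ.filter (fun ℓ => hash f ℓ = m),
                    PLZ (ℓ, z) * (q f (m, z) / PZ z) ^ ρ := by
                  refine Finset.sum_congr rfl fun m _ => ?_
                  rw [hq, Finset.sum_mul]
              _ = ∑ m, ∑ ℓ ∈ univ.filter (fun ℓ => hash f ℓ = m),
                    PLZ (ℓ, z) * (q f (hash f ℓ, z) / PZ z) ^ ρ := by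
                  refine Finset.sum_congr rfl fun m _ => Finset.sum_congr rfl fun ℓ hℓ => ?_
                  rw [(Finset.mem_filter.mp hℓ).2]
              _ = ∑ ℓ, PLZ (ℓ, z) * (q f (hash f ℓ, z) / PZ z) ^ ρ :=
                  Finset.sum_fiberwise _ _ _
        _ = ∑ p : L × Z, PLZ p * (q f (hash f p.1, p.2) / PZ p.2) ^ ρ :=
            (Fintype.sum_prod_type_right
              (fun p : L × Z => PLZ p * (q f (hash f p.1, p.2) / PZ p.2) ^ ρ)).symm
    have step : ∀ p : L × Z, PLZ p * (q f (hash f p.1, p.2) / PZ p.2) ^ ρ ≤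
        PLZ p * (PLZ p / PZ p.2) ^ ρ + PLZ p * (T f p.2 p.1 / PZ p.2) ^ ρ := by
      intro p
      rcases (hPnn p).eq_or_lt with h | h
      · simp [← h]
      · have hPZp : 0 < PZ p.2 := lt_of_lt_of_le h (hPle p)
        have hqdecomp : q f (hash f p.1, p.2) = T f p.2 p.1 + PLZ p := by
          rw [hq, Finset.sum_filter, ← Finset.sum_erase_add univ _ (Finset.mem_univ p.1),
            if_pos rfl]
        rw [hqdecomp, add_div, ← mul_add]
        refine mul_le_mul_of_nonneg_left ?_ h.le
        refine le_trans (pa_rpow_add_le (div_nonneg (hTnn f p.2 p.1) hPZp.le)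
          (div_nonneg h.le hPZp.le) hρ0.le hρ1) ?_
        rw [add_comm]
    calc S f = ∑ p : L × Z, PLZ p * (q f (hash f p.1, p.2) / PZ p.2) ^ ρ := hrw
      _ ≤ ∑ p : L × Z, (PLZ p * (PLZ p / PZ p.2) ^ ρ + PLZ p * (T f p.2 p.1 / PZ p.2) ^ ρ) :=
          Finset.sum_le_sum fun p _ => step p
      _ = R + ∑ p : L × Z, PLZ p * (T f p.2 p.1 / PZ p.2) ^ ρ := by
          rw [Finset.sum_add_distrib]
  -- Step 2: combine
  have key2 : ∑ f, μ f * S f ≤ cM ^ (-ρ) + R := by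
    calc ∑ f, μ f * S f
        ≤ ∑ f, μ f * (R + ∑ p : L × Z, PLZ p * (T f p.2 p.1 / PZ p.2) ^ ρ) :=
          Finset.sum_le_sum fun f _ => mul_le_mul_of_nonneg_left (hSbound f) (hμnn f)
      _ = (∑ f, μ f * R) + ∑ f, μ f * ∑ p : L × Z, PLZ p * (T f p.2 p.1 / PZ p.2) ^ ρ := by
          simp_rw [mul_add]
          exact Finset.sum_add_distrib
      _ = R + ∑ p : L × Z, PLZ p * ∑ f, μ f * (T f p.2 p.1 / PZ p.2) ^ ρ := by
          congr 1
          · rw [← Finset.sum_mul, hμsum, one_mul]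
          · calc ∑ f, μ f * ∑ p : L × Z, PLZ p * (T f p.2 p.1 / PZ p.2) ^ ρ
                = ∑ f, ∑ p : L × Z, μ f * (PLZ p * (T f p.2 p.1 / PZ p.2) ^ ρ) := by
                  exact Finset.sum_congr rfl fun f _ => Finset.mul_sum _ _ _
              _ = ∑ p : L × Z, ∑ f, μ f * (PLZ p * (T f p.2 p.1 / PZ p.2) ^ ρ) :=
                  Finset.sum_comm
              _ = ∑ p : L × Z, PLZ p * ∑ f, μ f * (T f p.2 p.1 / PZ p.2) ^ ρ := by
                  refine Finset.sum_congr rfl fun p _ => ?_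
                  rw [Finset.mul_sum]
                  exact Finset.sum_congr rfl fun f _ => by ring
      _ ≤ ∑ p : L × Z, PLZ p * cM ^ (-ρ) + R := by
          rw [add_comm]
          refine add_le_add_left (Finset.sum_le_sum fun p _ =>
            mul_le_mul_of_nonneg_left (hTbound p.2 p.1) (hPnn p)) R
      _ = cM ^ (-ρ) + R := by rw [← Finset.sum_mul, hPsum, one_mul]
  -- relate R with the filtered sum in the goal
  have key3 : ∑ p ∈ univ.filter (fun p : L × Z => 0 < PZ p.2),
      PLZ p * (PLZ p / PZ p.2) ^ ρ = R := by
    rw [hRdef]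
    refine Finset.sum_filter_of_ne fun p _ hne => ?_
    by_contra h
    have h0 : PZ p.2 = 0 := le_antisymm (not_lt.mp h) (hPZnn p.2)
    have hP0 : PLZ p = 0 := le_antisymm (h0 ▸ hPle p) (hPnn p)
    exact hne (by rw [hP0, zero_mul])
  -- final assembly
  calc ∑ f, μ f * Real.exp (ρ * mutInfo (q f))
      ≤ ∑ f, μ f * (cM ^ ρ * S f) :=
        Finset.sum_le_sum fun f _ => mul_le_mul_of_nonneg_left (key1 f) (hμnn f)
    _ = cM ^ ρ * ∑ f, μ f * S f := by
        rw [Finset.mul_sum]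
        exact Finset.sum_congr rfl fun f _ => by ring
    _ ≤ cM ^ ρ * (cM ^ (-ρ) + R) :=
        mul_le_mul_of_nonneg_left key2 (Real.rpow_nonneg hcM.le ρ)
    _ = 1 + cM ^ ρ * R := by
        rw [mul_add, ← Real.rpow_add hcM, add_neg_cancel, Real.rpow_zero]
    _ = 1 + cM ^ ρ * ∑ p ∈ univ.filter (fun p : L × Z => 0 < PZ p.2),
          PLZ p * (PLZ p / PZ p.2) ^ ρ := by rw [key3]
end

section
/- Let ℒ, 𝒵, ℳ be nonempty finite sets, let W be a channel from ℒ to 𝒵, let P be the uniform distribution on ℒ, and let P_{LZ}(ℓ, z) = W(z|ℓ)/|ℒ| be the induced joint distribution with marginal P_Z(z) = ∑_ℓ W(z|ℓ)/|ℒ|. Let (𝓕, μ) be a two-universal family of hash functions from ℒ to ℳ, and for f ∈ 𝓕 define the joint distribution q_f on ℳ × 𝒵 by q_f(m, z) = ∑_{ℓ : f(ℓ) = m} P_{LZ}(ℓ, z). Then for every ρ with 0 < ρ ≤ 1, ∑_{f ∈ 𝓕} μ(f) · exp(ρ · I(q_f)) ≤ 1 + (|ℳ|/|ℒ|)^ρ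 · exp(ψ(ρ, W, P)). -/
open Finset

/-- The function `ψ(ρ, W, P) = log ∑_{(z,ℓ) : P_Z z > 0} P(ℓ) W(z|ℓ)^{1+ρ} P_Z(z)^{-ρ}`,
where `P_Z(z) = ∑_ℓ P(ℓ) W(z|ℓ)`. -/
noncomputable def psiFun {L Z : Type*} [Fintype L] [Fintype Z]
    (ρ : ℝ) (W : L → Z → ℝ) (P : L → ℝ) : ℝ :=
  Real.log (∑ p ∈ univ.filter (fun p : Z × L => 0 < ∑ ℓ, P ℓ * W ℓ p.1),
    P p.2 * W p.2 p.1 ^ (1 + ρ) * (∑ ℓ, P ℓ * W ℓ p.1) ^ (-ρ))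

lemma exp_sum_le' {ι : Type*} [Fintype ι] (w x : ι → ℝ)
    (hw : ∀ i, 0 ≤ w i) (hw1 : ∑ i, w i = 1) :
    Real.exp (∑ i, w i * x i) ≤ ∑ i, w i * Real.exp (x i) := by
  simpa [smul_eq_mul] using
    convexOn_exp.map_sum_le (t := univ) (w := w) (p := x)
      (fun i _ => hw i) hw1 (fun i _ => Set.mem_univ _)

lemma gibbs' {ι : Type*} [Fintype ι] [Nonempty ι] (w : ι → ℝ)
    (hw : ∀ i, 0 ≤ w i) (hw1 : ∑ i, w i = 1) :
    0 ≤ ∑ i, w i * Real.log (w i * (Fintype.card ι : ℝ)) := by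
  set n : ℝ := (Fintype.card ι : ℝ) with hn
  have hn0 : (0:ℝ) < n := by
    simp only [hn]; exact_mod_cast Fintype.card_pos
  have h := Real.convexOn_mul_log.map_sum_le (t := univ) (w := fun _ => 1/n)
    (p := fun i => n * w i) (fun i _ => by positivity) (by
      simp only [Finset.sum_const, Finset.card_univ, nsmul_eq_mul]
      field_simp; exact hn.symm)
    (fun i _ => by have := hw i; simp only [Set.mem_Ici]; positivity)
  simp only [smul_eq_mul] at h
  have hterm : ∀ i : ι, 1/n * (n * w i) = w i := fun i => by field_simp
  rw [Finset.sum_congr rfl (fun i _ => hterm i), hw1] at h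
  simp only [Real.log_one, mul_zero, one_mul] at h
  calc (0:ℝ) ≤ ∑ i, 1/n * (n * w i * Real.log (n * w i)) := h
  _ = ∑ i, w i * Real.log (w i * n) := by
      refine Finset.sum_congr rfl fun i _ => ?_
      rw [mul_comm (w i) n]; field_simp

lemma rpow_add_le_add_rpow' {a b p : ℝ} (ha : 0 ≤ a) (hb : 0 ≤ b)
    (hp : 0 ≤ p) (hp1 : p ≤ 1) : (a + b) ^ p ≤ a ^ p + b ^ p := by
  have h := NNReal.rpow_add_le_add_rpow a.toNNReal b.toNNReal hp hp1
  rw [← Real.toNNReal_add ha hb] at h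
  have h2 := NNReal.coe_le_coe.2 h
  push_cast at h2
  rwa [Real.coe_toNNReal _ (add_nonneg ha hb),
    Real.coe_toNNReal _ ha, Real.coe_toNNReal _ hb] at h2

lemma jensen_rpow' {ι : Type*} [Fintype ι] (w R : ι → ℝ)
    (hw : ∀ i, 0 ≤ w i) (hw1 : ∑ i, w i = 1) (hR : ∀ i, 0 ≤ R i)
    {ρ : ℝ} (hρ0 : 0 < ρ) (hρ1 : ρ ≤ 1) :
    ∑ i, w i * R i ^ ρ ≤ (∑ i, w i * R i) ^ ρ := by
  have hp : 1 ≤ 1/ρ := by rw [le_div_iff₀ hρ0]; linarith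
  have h := Real.arith_mean_le_rpow_mean univ w (fun i => R i ^ ρ)
    (fun i _ => hw i) hw1 (fun i _ => Real.rpow_nonneg (hR i) ρ) hp
  have hz : ∀ i : ι, (R i ^ ρ) ^ (1/ρ) = R i := fun i => by
    rw [← Real.rpow_mul (hR i), mul_one_div_cancel hρ0.ne', Real.rpow_one]
  calc ∑ i, w i * R i ^ ρ
      ≤ (∑ i, w i * (R i ^ ρ) ^ (1/ρ)) ^ (1/(1/ρ)) := h
    _ = (∑ i, w i * R i) ^ ρ := by
        rw [Finset.sum_congr rfl (fun i _ => by rw [hz i]), one_div_one_div]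

lemma rpow_one_add'' {x ρ : ℝ} (hx : 0 ≤ x) (hρ : 0 < ρ) : x ^ (1+ρ) = x * x ^ ρ := by
  rcases hx.eq_or_lt with h|h
  · rw [← h, Real.zero_rpow (by positivity), Real.zero_rpow hρ.ne', mul_zero]
  · rw [Real.rpow_add h, Real.rpow_one]

lemma lemA {M Z : Type*} [Fintype M] [Fintype Z] [Nonempty M]
    (q : M × Z → ℝ) (hnn : ∀ p, 0 ≤ q p) (hsum : ∑ p, q p = 1)
    {ρ : ℝ} (hρ0 : 0 < ρ) :
    Real.exp (ρ * mutInfo q) ≤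
      (Fintype.card M : ℝ) ^ ρ * ∑ p : M × Z, q p ^ (1 + ρ) * (∑ m, q (m, p.2)) ^ (-ρ) := by
  classical
  set cM : ℝ := (Fintype.card M : ℝ) with hcM
  have hcM0 : (0:ℝ) < cM := by simp only [hcM]; exact_mod_cast Fintype.card_pos
  set qA : M → ℝ := fun m => ∑ z, q (m, z) with hqA
  set qB : Z → ℝ := fun z => ∑ m, q (m, z) with hqB
  have hqAnn : ∀ m, 0 ≤ qA m := fun m => Finset.sum_nonneg fun z _ => hnn _
  have hqBnn : ∀ z, 0 ≤ qB z := fun z => Finset.sum_nonneg fun m _ => hnn _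
  have hqle_A : ∀ p : M × Z, q p ≤ qA p.1 := fun p => by
    simpa using Finset.single_le_sum (f := fun z => q (p.1, z))
      (fun z _ => hnn _) (Finset.mem_univ p.2)
  have hqle_B : ∀ p : M × Z, q p ≤ qB p.2 := fun p => by
    simpa using Finset.single_le_sum (f := fun m => q (m, p.2))
      (fun m _ => hnn _) (Finset.mem_univ p.1)
  have hqA1 : ∑ m, qA m = 1 := by rw [← hsum, Fintype.sum_prod_type]
  set x : M × Z → ℝ := fun p => ρ * Real.log (q p * cM / qB p.2) with hx
  have hxp : ∀ p : M × Z, x p = ρ * Real.log (q p * cM / qB p.2) := fun p => rfl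
  -- Step 1 : ρ * mutInfo q ≤ ∑ p, q p * x p
  have step1 : ρ * mutInfo q ≤ ∑ p, q p * x p := by
    have key : ∀ p : M × Z,
        q p * x p - ρ * (q p * Real.log (q p / ((∑ b, q (p.1, b)) * (∑ a, q (a, p.2)))))
          = ρ * (q p * Real.log (qA p.1 * cM)) := by
      intro p
      have hAB : qA p.1 * qB p.2 = (∑ b, q (p.1, b)) * (∑ a, q (a, p.2)) := rfl
      rw [← hAB, hxp p]
      rcases (hnn p).eq_or_lt with h0|h0
      · rw [← h0]; ring
      · have hA : 0 < qA p.1 := lt_of_lt_of_le h0 (hqle_A p)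
        have hB : 0 < qB p.2 := lt_of_lt_of_le h0 (hqle_B p)
        have l1 : Real.log (q p * cM / qB p.2)
            = Real.log (q p) + Real.log cM - Real.log (qB p.2) := by
          rw [Real.log_div (by positivity) hB.ne', Real.log_mul h0.ne' hcM0.ne']
        have l2 : Real.log (q p / (qA p.1 * qB p.2))
            = Real.log (q p) - (Real.log (qA p.1) + Real.log (qB p.2)) := by
          rw [Real.log_div h0.ne' (by positivity), Real.log_mul hA.ne' hB.ne']
        have l3 : Real.log (qA p.1 * cM) = Real.log (qA p.1) + Real.log cM :=
          Real.log_mul hA.ne' hcM0.ne'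
        rw [l1, l2, l3]; ring
    have hdiff : (∑ p, q p * x p) - ρ * mutInfo q
        = ρ * ∑ m, qA m * Real.log (qA m * cM) := by
      rw [mutInfo, Finset.mul_sum, ← Finset.sum_sub_distrib,
        Finset.sum_congr rfl (fun p _ => key p), ← Finset.mul_sum,
        Fintype.sum_prod_type]
      congr 1
      refine Finset.sum_congr rfl fun m _ => ?_
      calc ∑ y : Z, q (m, y) * Real.log (qA (m, y).1 * cM)
          = ∑ y : Z, q (m, y) * Real.log (qA m * cM) := rfl
        _ = qA m * Real.log (qA m * cM) := by rw [← Finset.sum_mul]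
    have hpos : 0 ≤ ∑ m, qA m * Real.log (qA m * cM) := gibbs' qA hqAnn hqA1
    nlinarith [hdiff, mul_nonneg hρ0.le hpos]
  -- Step 2 : Jensen for exp
  have step2 : Real.exp (∑ p, q p * x p) ≤ ∑ p, q p * Real.exp (x p) :=
    exp_sum_le' q x hnn hsum
  -- Step 3 : identify the RHS
  have step3 : ∑ p, q p * Real.exp (x p)
      = cM ^ ρ * ∑ p : M × Z, q p ^ (1 + ρ) * qB p.2 ^ (-ρ) := by
    rw [Finset.mul_sum]
    refine Finset.sum_congr rfl fun p _ => ?_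
    rw [hxp p]
    rcases (hnn p).eq_or_lt with h0|h0
    · rw [← h0, Real.zero_rpow (by positivity)]; ring
    · have hB : 0 < qB p.2 := lt_of_lt_of_le h0 (hqle_B p)
      have ht : 0 < q p * cM / qB p.2 := by positivity
      have : Real.exp (ρ * Real.log (q p * cM / qB p.2)) = (q p * cM / qB p.2) ^ ρ := by
        rw [Real.rpow_def_of_pos ht, mul_comm]
      rw [this, Real.div_rpow (by positivity) hB.le, Real.mul_rpow h0.le hcM0.le,
        Real.rpow_neg hB.le, rpow_one_add'' h0.le hρ0]
      field_simp
  have hfin : ∑ p : M × Z, q p ^ (1 + ρ) * qB p.2 ^ (-ρ)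
      = ∑ p : M × Z, q p ^ (1 + ρ) * (∑ m, q (m, p.2)) ^ (-ρ) := rfl
  calc Real.exp (ρ * mutInfo q) ≤ Real.exp (∑ p, q p * x p) := Real.exp_le_exp.2 step1
    _ ≤ ∑ p, q p * Real.exp (x p) := step2
    _ = cM ^ ρ * ∑ p : M × Z, q p ^ (1 + ρ) * qB p.2 ^ (-ρ) := step3
    _ = _ := by rw [hfin]

/-- Privacy amplification for a channel `W : L → Z` with uniform input distribution:
`∑_f μ(f) exp(ρ I(q_f)) ≤ 1 + (|M|/|L|)^ρ exp(ψ(ρ, W, P))`. -/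
theorem privacy_amplification_uniform
    {L Z M F : Type*} [Fintype L] [Fintype Z] [Fintype M] [Fintype F]
    [Nonempty L] [Nonempty Z] [Nonempty M] [Nonempty F] [DecidableEq M]
    (W : L → Z → ℝ) (hWnn : ∀ ℓ z, 0 ≤ W ℓ z) (hWsum : ∀ ℓ, ∑ z, W ℓ z = 1)
    (P : L → ℝ) (hP : ∀ ℓ, P ℓ = 1 / (Fintype.card L : ℝ))
    (PLZ : L × Z → ℝ) (hPLZ : ∀ ℓ z, PLZ (ℓ, z) = W ℓ z / (Fintype.card L : ℝ))
    (PZ : Z → ℝ) (hPZ : ∀ z, PZ z = ∑ ℓ, W ℓ z / (Fintype.card L : ℝ))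
    (hash : F → L → M) (μ : F → ℝ)
    (hμnn : ∀ f, 0 ≤ μ f) (hμsum : ∑ f, μ f = 1)
    (h2u : ∀ x₁ x₂ : L, x₁ ≠ x₂ →
      ∑ f ∈ univ.filter (fun f => hash f x₁ = hash f x₂), μ f ≤ 1 / (Fintype.card M : ℝ))
    (q : F → M × Z → ℝ)
    (hq : ∀ f m z, q f (m, z) = ∑ ℓ ∈ univ.filter (fun ℓ => hash f ℓ = m), PLZ (ℓ, z))
    (ρ : ℝ) (hρ0 : 0 < ρ) (hρ1 : ρ ≤ 1) :
    ∑ f, μ f * Real.exp (ρ * mutInfo (q f)) ≤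
      1 + ((Fintype.card M : ℝ) / (Fintype.card L : ℝ)) ^ ρ *
        Real.exp (psiFun ρ W P) := by
  classical
  set cL : ℝ := (Fintype.card L : ℝ) with hcL
  set cM : ℝ := (Fintype.card M : ℝ) with hcM
  have hcL0 : (0:ℝ) < cL := by simp only [hcL]; exact_mod_cast Fintype.card_pos
  have hcM0 : (0:ℝ) < cM := by simp only [hcM]; exact_mod_cast Fintype.card_pos
  have hPLZnn : ∀ ℓ z, 0 ≤ PLZ (ℓ, z) := fun ℓ z => by
    rw [hPLZ]; have := hWnn ℓ z; positivity
  have hPZnn : ∀ z, 0 ≤ PZ z := fun z => by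
    rw [hPZ]; exact Finset.sum_nonneg fun ℓ _ => by have := hWnn ℓ z; positivity
  have hqnn : ∀ f p, 0 ≤ q f p := by
    rintro f ⟨m, z⟩
    rw [hq]; exact Finset.sum_nonneg fun ℓ _ => hPLZnn ℓ z
  have hPLZsum : ∀ z, ∑ ℓ, PLZ (ℓ, z) = PZ z := fun z => by
    rw [hPZ]; exact Finset.sum_congr rfl fun ℓ _ => hPLZ ℓ z
  have hqB : ∀ f z, ∑ m, q f (m, z) = PZ z := by
    intro f z
    rw [← hPLZsum z]
    rw [Finset.sum_congr rfl (fun m _ => hq f m z)]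
    exact Finset.sum_fiberwise_of_maps_to (fun ℓ _ => mem_univ _) _
  have hPZ1 : ∑ z, PZ z = 1 := by
    calc ∑ z, PZ z = ∑ z, ∑ ℓ, W ℓ z / cL := by
          exact Finset.sum_congr rfl fun z _ => hPZ z
      _ = ∑ ℓ, ∑ z, W ℓ z / cL := Finset.sum_comm
      _ = ∑ ℓ : L, 1 / cL := by
          refine Finset.sum_congr rfl fun ℓ _ => ?_
          rw [← Finset.sum_div, hWsum]
      _ = 1 := by
          rw [Finset.sum_const, Finset.card_univ, nsmul_eq_mul, ← hcL]
          field_simp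
  have hqsum : ∀ f, ∑ p, q f p = 1 := by
    intro f
    rw [Fintype.sum_prod_type_right]
    rw [Finset.sum_congr rfl (fun z _ => hqB f z)]
    exact hPZ1
  -- the quantity S f
  set S : F → ℝ := fun f => ∑ p : M × Z, q f p ^ (1 + ρ) * PZ p.2 ^ (-ρ) with hS
  have hlemA : ∀ f, Real.exp (ρ * mutInfo (q f)) ≤ cM ^ ρ * S f := by
    intro f
    have h := lemA (q f) (hqnn f) (hqsum f) hρ0
    have : ∑ p : M × Z, q f p ^ (1 + ρ) * (∑ m, q f (m, p.2)) ^ (-ρ) = S f := by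
      exact Finset.sum_congr rfl fun p _ => by rw [hqB f p.2]
    rwa [this] at h
  -- collision remainder
  set R : F → L → Z → ℝ := fun f ℓ z =>
    ∑ ℓ' ∈ (univ.filter fun ℓ' => hash f ℓ' = hash f ℓ).erase ℓ, PLZ (ℓ', z) with hR
  have hRnn : ∀ f ℓ z, 0 ≤ R f ℓ z := fun f ℓ z =>
    Finset.sum_nonneg fun ℓ' _ => hPLZnn ℓ' z
  have hsplit : ∀ f ℓ z, q f (hash f ℓ, z) = PLZ (ℓ, z) + R f ℓ z := by
    intro f ℓ z
    rw [hq]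
    exact (Finset.add_sum_erase (univ.filter fun ℓ' => hash f ℓ' = hash f ℓ)
      (fun ℓ' => PLZ (ℓ', z)) (mem_filter.2 ⟨mem_univ _, rfl⟩)).symm
  -- Step B1
  have B1 : ∀ f z, ∑ m, q f (m, z) ^ (1 + ρ)
      ≤ ∑ ℓ, PLZ (ℓ, z) ^ (1 + ρ) + ∑ ℓ, PLZ (ℓ, z) * R f ℓ z ^ ρ := by
    intro f z
    calc ∑ m, q f (m, z) ^ (1 + ρ)
        = ∑ m, ∑ ℓ ∈ univ.filter (fun ℓ => hash f ℓ = m),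
            PLZ (ℓ, z) * q f (hash f ℓ, z) ^ ρ := by
          refine Finset.sum_congr rfl fun m _ => ?_
          rw [rpow_one_add'' (hqnn f (m, z)) hρ0]
          nth_rewrite 1 [hq]
          rw [Finset.sum_mul]
          refine Finset.sum_congr rfl fun ℓ hℓ => ?_
          rw [(mem_filter.1 hℓ).2]
      _ = ∑ ℓ, PLZ (ℓ, z) * q f (hash f ℓ, z) ^ ρ :=
          Finset.sum_fiberwise_of_maps_to (fun ℓ _ => mem_univ _) _
      _ ≤ ∑ ℓ, PLZ (ℓ, z) * (PLZ (ℓ, z) ^ ρ + R f ℓ z ^ ρ) := by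
          refine Finset.sum_le_sum fun ℓ _ => ?_
          refine mul_le_mul_of_nonneg_left ?_ (hPLZnn ℓ z)
          rw [hsplit f ℓ z]
          exact rpow_add_le_add_rpow' (hPLZnn ℓ z) (hRnn f ℓ z) hρ0.le hρ1
      _ = ∑ ℓ, PLZ (ℓ, z) ^ (1 + ρ) + ∑ ℓ, PLZ (ℓ, z) * R f ℓ z ^ ρ := by
          rw [← Finset.sum_add_distrib]
          refine Finset.sum_congr rfl fun ℓ _ => ?_
          rw [rpow_one_add'' (hPLZnn ℓ z) hρ0]; ring
  -- Step B2
  have B2 : ∀ ℓ z, ∑ f, μ f * R f ℓ z ^ ρ ≤ (PZ z / cM) ^ ρ := by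
    intro ℓ z
    have hRalt : ∀ f, R f ℓ z
        = ∑ ℓ' ∈ univ.erase ℓ, (if hash f ℓ' = hash f ℓ then PLZ (ℓ', z) else 0) := by
      intro f
      show (∑ ℓ' ∈ (univ.filter fun ℓ' => hash f ℓ' = hash f ℓ).erase ℓ, PLZ (ℓ', z)) = _
      rw [← Finset.filter_erase, Finset.sum_filter]
    have hmean : ∑ f, μ f * R f ℓ z ≤ PZ z / cM := by
      calc ∑ f, μ f * R f ℓ z
          = ∑ ℓ' ∈ univ.erase ℓ, PLZ (ℓ', z) *
              ∑ f ∈ univ.filter (fun f => hash f ℓ' = hash f ℓ), μ f := by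
            rw [Finset.sum_congr rfl (fun f (_ : f ∈ univ) => by
              rw [hRalt f, Finset.mul_sum]), Finset.sum_comm]
            refine Finset.sum_congr rfl fun ℓ' _ => ?_
            rw [Finset.sum_filter, Finset.mul_sum]
            refine Finset.sum_congr rfl fun f _ => ?_
            by_cases h : hash f ℓ' = hash f ℓ <;> simp [h, mul_comm]
        _ ≤ ∑ ℓ' ∈ univ.erase ℓ, PLZ (ℓ', z) * (1 / cM) := by
            refine Finset.sum_le_sum fun ℓ' hℓ' => ?_
            exact mul_le_mul_of_nonneg_left
              (h2u ℓ' ℓ (Finset.ne_of_mem_erase hℓ')) (hPLZnn ℓ' z)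
        _ ≤ ∑ ℓ', PLZ (ℓ', z) * (1 / cM) := by
            refine Finset.sum_le_sum_of_subset_of_nonneg (Finset.subset_univ _)
              fun ℓ' _ _ => ?_
            have := hPLZnn ℓ' z; positivity
        _ = PZ z / cM := by
            rw [← Finset.sum_mul, hPLZsum z]; ring
    calc ∑ f, μ f * R f ℓ z ^ ρ
        ≤ (∑ f, μ f * R f ℓ z) ^ ρ :=
          jensen_rpow' μ (fun f => R f ℓ z) hμnn hμsum (fun f => hRnn f ℓ z) hρ0 hρ1
      _ ≤ (PZ z / cM) ^ ρ := by
          refine Real.rpow_le_rpow ?_ hmean hρ0.le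
          exact Finset.sum_nonneg fun f _ => mul_nonneg (hμnn f) (hRnn f ℓ z)
  -- rewrite S f as iterated sum
  have hSsplit : ∀ f, S f = ∑ z, (∑ m, q f (m, z) ^ (1 + ρ)) * PZ z ^ (-ρ) := by
    intro f
    show (∑ p : M × Z, q f p ^ (1 + ρ) * PZ p.2 ^ (-ρ)) = _
    rw [Fintype.sum_prod_type_right]
    refine Finset.sum_congr rfl fun z _ => ?_
    dsimp only
    rw [← Finset.sum_mul]
  -- combine B1 and B2
  have main2 : ∀ z, ∑ f, μ f * (∑ m, q f (m, z) ^ (1 + ρ))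
      ≤ ∑ ℓ, PLZ (ℓ, z) ^ (1 + ρ) + PZ z * (PZ z / cM) ^ ρ := by
    intro z
    calc ∑ f, μ f * (∑ m, q f (m, z) ^ (1 + ρ))
        ≤ ∑ f, μ f * (∑ ℓ, PLZ (ℓ, z) ^ (1 + ρ) + ∑ ℓ, PLZ (ℓ, z) * R f ℓ z ^ ρ) :=
          Finset.sum_le_sum fun f _ => mul_le_mul_of_nonneg_left (B1 f z) (hμnn f)
      _ = ∑ ℓ, PLZ (ℓ, z) ^ (1 + ρ) + ∑ ℓ, PLZ (ℓ, z) * ∑ f, μ f * R f ℓ z ^ ρ := by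
          rw [Finset.sum_congr rfl (fun f (_ : f ∈ univ) => mul_add (μ f)
            (∑ ℓ, PLZ (ℓ, z) ^ (1 + ρ)) (∑ ℓ, PLZ (ℓ, z) * R f ℓ z ^ ρ)),
            Finset.sum_add_distrib, ← Finset.sum_mul, hμsum, one_mul]
          congr 1
          calc ∑ f, μ f * ∑ ℓ, PLZ (ℓ, z) * R f ℓ z ^ ρ
              = ∑ f, ∑ ℓ, PLZ (ℓ, z) * (μ f * R f ℓ z ^ ρ) := by
                refine Finset.sum_congr rfl fun f _ => ?_
                rw [Finset.mul_sum]
                exact Finset.sum_congr rfl fun ℓ _ => by ring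
            _ = ∑ ℓ, PLZ (ℓ, z) * ∑ f, μ f * R f ℓ z ^ ρ := by
                rw [Finset.sum_comm]
                exact Finset.sum_congr rfl fun ℓ _ => by rw [← Finset.mul_sum]
      _ ≤ ∑ ℓ, PLZ (ℓ, z) ^ (1 + ρ) + ∑ ℓ, PLZ (ℓ, z) * (PZ z / cM) ^ ρ := by
          refine add_le_add_right (Finset.sum_le_sum fun ℓ _ => ?_) _
          exact mul_le_mul_of_nonneg_left (B2 ℓ z) (hPLZnn ℓ z)
      _ = ∑ ℓ, PLZ (ℓ, z) ^ (1 + ρ) + PZ z * (PZ z / cM) ^ ρ := by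
          rw [← Finset.sum_mul, hPLZsum z]
  have hcMρ : (0:ℝ) < cM ^ ρ := Real.rpow_pos_of_pos hcM0 ρ
  -- main averaged bound on S
  have main3 : ∑ f, μ f * S f
      ≤ (∑ z, (∑ ℓ, PLZ (ℓ, z) ^ (1 + ρ)) * PZ z ^ (-ρ)) + 1 / cM ^ ρ := by
    calc ∑ f, μ f * S f
        = ∑ z, (∑ f, μ f * (∑ m, q f (m, z) ^ (1 + ρ))) * PZ z ^ (-ρ) := by
          rw [Finset.sum_congr rfl (fun f (_ : f ∈ univ) => by
            rw [hSsplit f, Finset.mul_sum]), Finset.sum_comm]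
          refine Finset.sum_congr rfl fun z _ => ?_
          rw [Finset.sum_mul]
          exact Finset.sum_congr rfl fun f _ => by ring
      _ ≤ ∑ z, (∑ ℓ, PLZ (ℓ, z) ^ (1 + ρ) + PZ z * (PZ z / cM) ^ ρ) * PZ z ^ (-ρ) := by
          refine Finset.sum_le_sum fun z _ => ?_
          exact mul_le_mul_of_nonneg_right (main2 z) (Real.rpow_nonneg (hPZnn z) _)
      _ = (∑ z, (∑ ℓ, PLZ (ℓ, z) ^ (1 + ρ)) * PZ z ^ (-ρ))
            + ∑ z, PZ z * (PZ z / cM) ^ ρ * PZ z ^ (-ρ) := by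
          rw [← Finset.sum_add_distrib]
          exact Finset.sum_congr rfl fun z _ => by ring
      _ ≤ _ := by
          refine add_le_add_right ?_ _
          calc ∑ z, PZ z * (PZ z / cM) ^ ρ * PZ z ^ (-ρ)
              ≤ ∑ z, PZ z * (1 / cM ^ ρ) := by
                refine Finset.sum_le_sum fun z _ => ?_
                rcases (hPZnn z).eq_or_lt with h0|h0
                · rw [← h0]; simp
                · have hPZρ : (0:ℝ) < PZ z ^ ρ := Real.rpow_pos_of_pos h0 ρ
                  rw [Real.div_rpow (hPZnn z) hcM0.le, Real.rpow_neg (hPZnn z)]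
                  have : PZ z * (PZ z ^ ρ / cM ^ ρ) * (PZ z ^ ρ)⁻¹
                      = PZ z * (1 / cM ^ ρ) := by field_simp
                  rw [this]
            _ = 1 / cM ^ ρ := by rw [← Finset.sum_mul, hPZ1, one_mul]
  -- identify T with psi
  set Psi : ℝ := ∑ p : Z × L, P p.2 * W p.2 p.1 ^ (1 + ρ) * PZ p.1 ^ (-ρ) with hPsi
  have hT : cM ^ ρ * ∑ z, (∑ ℓ, PLZ (ℓ, z) ^ (1 + ρ)) * PZ z ^ (-ρ)
      = (cM / cL) ^ ρ * Psi := by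
    rw [hPsi, Fintype.sum_prod_type, Finset.mul_sum, Finset.mul_sum]
    refine Finset.sum_congr rfl fun z _ => ?_
    dsimp only
    rw [Finset.sum_mul, Finset.mul_sum, Finset.mul_sum]
    refine Finset.sum_congr rfl fun ℓ _ => ?_
    rw [hPLZ, hP, Real.div_rpow (hWnn ℓ z) hcL0.le, Real.div_rpow hcM0.le hcL0.le,
      rpow_one_add'' hcL0.le hρ0]
    have h1 : (0:ℝ) < cL ^ ρ := Real.rpow_pos_of_pos hcL0 ρ
    field_simp
  have hPsum : ∀ z, ∑ ℓ, P ℓ * W ℓ z = PZ z := by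
    intro z
    rw [hPZ]
    exact Finset.sum_congr rfl fun ℓ _ => by rw [hP]; ring
  have hΨpsi : Psi ≤ Real.exp (psiFun ρ W P) := by
    have hfull : (∑ p ∈ univ.filter (fun p : Z × L => 0 < ∑ ℓ, P ℓ * W ℓ p.1),
        P p.2 * W p.2 p.1 ^ (1 + ρ) * (∑ ℓ, P ℓ * W ℓ p.1) ^ (-ρ)) = Psi := by
      have e1 : (∑ p ∈ univ.filter (fun p : Z × L => 0 < ∑ ℓ, P ℓ * W ℓ p.1),
          P p.2 * W p.2 p.1 ^ (1 + ρ) * (∑ ℓ, P ℓ * W ℓ p.1) ^ (-ρ))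
          = ∑ p ∈ univ.filter (fun p : Z × L => 0 < ∑ ℓ, P ℓ * W ℓ p.1),
          P p.2 * W p.2 p.1 ^ (1 + ρ) * PZ p.1 ^ (-ρ) :=
        Finset.sum_congr rfl fun p _ => by rw [hPsum p.1]
      rw [e1, hPsi]
      refine Finset.sum_subset (Finset.filter_subset _ _) ?_
      intro p _ hp
      simp only [Finset.mem_filter, Finset.mem_univ, true_and, not_lt] at hp
      have hnn : 0 ≤ ∑ ℓ, P ℓ * W ℓ p.1 := Finset.sum_nonneg fun ℓ _ => by
        rw [hP]; have := hWnn ℓ p.1; positivity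
      have h0 : ∑ ℓ, P ℓ * W ℓ p.1 = 0 := le_antisymm hp hnn
      rw [← hPsum p.1, h0, Real.zero_rpow (by simpa using hρ0.ne'), mul_zero]
    rw [psiFun, hfull]
    exact Real.le_exp_log Psi
  have hdivnn : (0:ℝ) ≤ (cM / cL) ^ ρ := Real.rpow_nonneg (by positivity) ρ
  -- final chain
  calc ∑ f, μ f * Real.exp (ρ * mutInfo (q f))
      ≤ ∑ f, μ f * (cM ^ ρ * S f) :=
        Finset.sum_le_sum fun f _ => mul_le_mul_of_nonneg_left (hlemA f) (hμnn f)
    _ = cM ^ ρ * ∑ f, μ f * S f := by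
        rw [Finset.mul_sum]
        exact Finset.sum_congr rfl fun f _ => by ring
    _ ≤ cM ^ ρ * ((∑ z, (∑ ℓ, PLZ (ℓ, z) ^ (1 + ρ)) * PZ z ^ (-ρ)) + 1 / cM ^ ρ) :=
        mul_le_mul_of_nonneg_left main3 hcMρ.le
    _ = cM ^ ρ * ∑ z, (∑ ℓ, PLZ (ℓ, z) ^ (1 + ρ)) * PZ z ^ (-ρ) + 1 := by
        rw [mul_add]
        congr 1
        field_simp
    _ = (cM / cL) ^ ρ * Psi + 1 := by rw [hT]
    _ ≤ (cM / cL) ^ ρ * Real.exp (psiFun ρ W P) + 1 :=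
        add_le_add_left (mul_le_mul_of_nonneg_left hΨpsi hdivnn) 1
    _ = 1 + (cM / cL) ^ ρ * Real.exp (psiFun ρ W P) := add_comm _ _
end

section
/- Let ℒ and 𝒵 be nonempty finite sets, W a channel from ℒ to 𝒵, P a probability distribution on ℒ, and let P_Z(z) = ∑_ℓ P(ℓ) W(z|ℓ). Then for every ρ with 0 < ρ < 1, ∑_{(z,ℓ) : P_Z(z) > 0} P(ℓ) W(z|ℓ)^{1+ρ} P_Z(z)^{−ρ} ≤ ∑_z ( ∑_ℓ P(ℓ) W(z|ℓ)^{1/(1−ρ)} )^{1−ρ}; equivalently, exp(ψ(ρ, W, P)) ≤ exp(φ(ρ, W, P)). -/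
open Finset

/-- `exp(ψ(ρ, W, P)) ≤ exp(φ(ρ, W, P))`:
`∑_{(z,ℓ) : P_Z z > 0} P(ℓ) W(z|ℓ)^{1+ρ} P_Z(z)^{-ρ}
  ≤ ∑_z (∑_ℓ P(ℓ) W(z|ℓ)^{1/(1-ρ)})^{1-ρ}` for `0 < ρ < 1`. -/
theorem psi_le_phi
    {L Z : Type*} [Fintype L] [Fintype Z] [Nonempty L] [Nonempty Z]
    (W : L → Z → ℝ) (hWnn : ∀ ℓ z, 0 ≤ W ℓ z) (hWsum : ∀ ℓ, ∑ z, W ℓ z = 1)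
    (P : L → ℝ) (hPnn : ∀ ℓ, 0 ≤ P ℓ) (hPsum : ∑ ℓ, P ℓ = 1)
    (PZ : Z → ℝ) (hPZ : ∀ z, PZ z = ∑ ℓ, P ℓ * W ℓ z)
    (ρ : ℝ) (hρ0 : 0 < ρ) (hρ1 : ρ < 1) :
    ∑ p ∈ univ.filter (fun p : Z × L => 0 < PZ p.1),
        P p.2 * W p.2 p.1 ^ (1 + ρ) * PZ p.1 ^ (-ρ) ≤
      ∑ z, (∑ ℓ, P ℓ * W ℓ z ^ (1 / (1 - ρ))) ^ (1 - ρ) := by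
  have h1ρ : (0:ℝ) < 1 - ρ := by linarith
  -- rewrite LHS as an iterated sum over z in the filter
  have hset : (univ.filter (fun p : Z × L => 0 < PZ p.1))
      = (univ.filter (fun z : Z => 0 < PZ z)) ×ˢ (univ : Finset L) := by
    ext p; simp
  rw [hset, Finset.sum_product]
  have hRnn : ∀ z : Z, (0:ℝ) ≤ (∑ ℓ, P ℓ * W ℓ z ^ (1 / (1 - ρ))) ^ (1 - ρ) := by
    intro z
    exact Real.rpow_nonneg (Finset.sum_nonneg fun ℓ _ =>
      mul_nonneg (hPnn ℓ) (Real.rpow_nonneg (hWnn ℓ z) _)) _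
  have key : ∀ z ∈ univ.filter (fun z : Z => 0 < PZ z),
      ∑ ℓ, P ℓ * W ℓ z ^ (1 + ρ) * PZ z ^ (-ρ) ≤
        (∑ ℓ, P ℓ * W ℓ z ^ (1 / (1 - ρ))) ^ (1 - ρ) := by
    intro z hz
    rw [Finset.mem_filter] at hz
    have hPZpos : 0 < PZ z := hz.2
    have hp : (1:ℝ) ≤ 1 / (1 - ρ) := by
      rw [le_div_iff₀ h1ρ]; linarith
    have holder := Real.inner_le_weight_mul_Lp_of_nonneg Finset.univ hp
      (fun ℓ => P ℓ * W ℓ z) (fun ℓ => W ℓ z ^ ρ)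
      (fun ℓ => mul_nonneg (hPnn ℓ) (hWnn ℓ z))
      (fun ℓ => Real.rpow_nonneg (hWnn ℓ z) ρ)
    have hinv : (1 / (1 - ρ))⁻¹ = 1 - ρ := by rw [one_div, inv_inv]
    rw [hinv] at holder
    have e1 : ∀ ℓ : L, P ℓ * W ℓ z * W ℓ z ^ ρ = P ℓ * W ℓ z ^ (1 + ρ) := by
      intro ℓ
      rw [Real.rpow_add' (hWnn ℓ z) (by positivity), Real.rpow_one, mul_assoc]
    have hex : 1 + ρ * (1 / (1 - ρ)) = 1 / (1 - ρ) := by field_simp; ring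
    have e2 : ∀ ℓ : L, P ℓ * W ℓ z * (W ℓ z ^ ρ) ^ (1 / (1 - ρ))
        = P ℓ * W ℓ z ^ (1 / (1 - ρ)) := by
      intro ℓ
      calc P ℓ * W ℓ z * (W ℓ z ^ ρ) ^ (1 / (1 - ρ))
          = P ℓ * (W ℓ z ^ (1:ℝ) * W ℓ z ^ (ρ * (1 / (1 - ρ)))) := by
            rw [← Real.rpow_mul (hWnn ℓ z), Real.rpow_one, mul_assoc]
        _ = P ℓ * W ℓ z ^ (1 + ρ * (1 / (1 - ρ))) := by
            rw [← Real.rpow_add' (hWnn ℓ z) (by rw [hex]; positivity)]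
        _ = P ℓ * W ℓ z ^ (1 / (1 - ρ)) := by rw [hex]
    simp only [e1, e2, ← hPZ z] at holder
    have h2 : 1 - (1 - ρ) = ρ := by ring
    rw [h2] at holder
    -- multiply both sides by PZ z ^ (-ρ)
    have hmul : (∑ ℓ, P ℓ * W ℓ z ^ (1 + ρ)) * PZ z ^ (-ρ)
        ≤ (PZ z ^ ρ * (∑ ℓ, P ℓ * W ℓ z ^ (1 / (1 - ρ))) ^ (1 - ρ)) * PZ z ^ (-ρ) :=
      mul_le_mul_of_nonneg_right holder (Real.rpow_nonneg hPZpos.le _)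
    have hcancel : PZ z ^ ρ * PZ z ^ (-ρ) = 1 := by
      rw [← Real.rpow_add hPZpos]; simp
    calc ∑ ℓ, P ℓ * W ℓ z ^ (1 + ρ) * PZ z ^ (-ρ)
        = (∑ ℓ, P ℓ * W ℓ z ^ (1 + ρ)) * PZ z ^ (-ρ) := by
          rw [Finset.sum_mul]
      _ ≤ (PZ z ^ ρ * (∑ ℓ, P ℓ * W ℓ z ^ (1 / (1 - ρ))) ^ (1 - ρ)) * PZ z ^ (-ρ) := hmul
      _ = (∑ ℓ, P ℓ * W ℓ z ^ (1 / (1 - ρ))) ^ (1 - ρ) := by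
          rw [mul_comm (PZ z ^ ρ), mul_assoc, hcancel, mul_one]
  calc ∑ z ∈ univ.filter (fun z : Z => 0 < PZ z),
        ∑ ℓ, P ℓ * W ℓ z ^ (1 + ρ) * PZ z ^ (-ρ)
      ≤ ∑ z ∈ univ.filter (fun z : Z => 0 < PZ z),
          (∑ ℓ, P ℓ * W ℓ z ^ (1 / (1 - ρ))) ^ (1 - ρ) := Finset.sum_le_sum key
    _ ≤ ∑ z, (∑ ℓ, P ℓ * W ℓ z ^ (1 / (1 - ρ))) ^ (1 - ρ) :=
        Finset.sum_le_sum_of_subset_of_nonneg (Finset.filter_subset _ _)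
          (fun z _ _ => hRnn z)
end

section
/- Let 𝒜 be a nonempty finite set and let Δ denote the set of probability distributions on 𝒜 (viewed as a subset of ℝ^𝒜). Let f : ℝ^𝒜 → ℝ be a function that is concave on Δ and nonnegative on Δ. If P, Q ∈ Δ, α ≥ 1 is a real number, and P(a) ≤ α · Q(a) for all a ∈ 𝒜, then f(P) ≤ α · f(Q). -/
/-- A nonnegative concave function `f` on the probability simplex satisfies
`f(P) ≤ α · f(Q)` whenever `P ≤ α · Q` pointwise with `α ≥ 1`. -/
theorem concave_nonneg_dominated
    {A : Type*} [Fintype A] [Nonempty A]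
    (f : (A → ℝ) → ℝ)
    (hconc : ConcaveOn ℝ (stdSimplex ℝ A) f)
    (hnn : ∀ P ∈ stdSimplex ℝ A, 0 ≤ f P)
    (P Q : A → ℝ) (hP : P ∈ stdSimplex ℝ A) (hQ : Q ∈ stdSimplex ℝ A)
    (α : ℝ) (hα : 1 ≤ α) (hPQ : ∀ a, P a ≤ α * Q a) :
    f P ≤ α * f Q := by
  rcases eq_or_lt_of_le hα with h1 | h1
  · -- α = 1, so P = Q
    subst h1
    have hPQ' : ∀ a, P a ≤ Q a := by simpa using hPQ
    have hsum : ∑ a, (Q a - P a) = 0 := by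
      rw [Finset.sum_sub_distrib, hQ.2, hP.2]; ring
    have hzero : ∀ a ∈ Finset.univ, Q a - P a = 0 := by
      intro a _
      have := Finset.sum_eq_zero_iff_of_nonneg
        (fun a _ => sub_nonneg.2 (hPQ' a)) |>.mp hsum
      exact this a (Finset.mem_univ a)
    have : P = Q := by
      funext a; have := hzero a (Finset.mem_univ a); linarith
    rw [this, one_mul]
  · -- α > 1
    have hα0 : 0 < α := lt_trans one_pos h1
    have hαm : 0 < α - 1 := by linarith
    set R : A → ℝ := fun a => (α * Q a - P a) / (α - 1) with hR
    have hRmem : R ∈ stdSimplex ℝ A := by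
      constructor
      · intro a
        exact div_nonneg (by linarith [hPQ a]) hαm.le
      · rw [show ∑ a, R a = (∑ a, (α * Q a - P a)) / (α - 1) by
          rw [Finset.sum_div]]
        rw [Finset.sum_sub_distrib, ← Finset.mul_sum, hQ.2, hP.2]
        field_simp
    have hcomb : (1/α) • P + ((α-1)/α) • R = Q := by
      funext a
      simp only [Pi.add_apply, Pi.smul_apply, smul_eq_mul, hR]
      field_simp
      ring
    have hconcav := hconc.2 hP hRmem
      (by positivity : (0:ℝ) ≤ 1/α)
      (by positivity : (0:ℝ) ≤ (α-1)/α)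
      (by field_simp; ring)
    rw [hcomb] at hconcav
    have hfR : 0 ≤ f R := hnn R hRmem
    simp only [smul_eq_mul] at hconcav
    have : (1/α) * f P ≤ f Q := by
      nlinarith [mul_nonneg (div_nonneg hαm.le hα0.le) hfR]
    calc f P = α * ((1/α) * f P) := by field_simp
    _ ≤ α * f Q := by nlinarith
end

section
/- Let ℒ and 𝒵 be nonempty finite sets, let W be a channel from ℒ to 𝒵, and fix ρ with 0 < ρ < 1. Then the function G : ℝ^ℒ → ℝ defined on the set Δ of probability distributions on ℒ by G(P) = ∑_z ( ∑_ℓ P(ℓ) W(z|ℓ)^{1/(1−ρ)} )^{1−ρ} (i.e. G(P) = exp(φ(ρ, W, P))) is concave on Δ. -/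
open Finset

/-- Gallager's function `G(P) = exp(φ(ρ, W, P)) = ∑_z (∑_ℓ P(ℓ) W(z|ℓ)^{1/(1-ρ)})^{1-ρ}`
is concave in the input distribution `P` on the probability simplex, for `0 < ρ < 1`. -/
theorem exp_phi_concaveOn
    {L Z : Type*} [Fintype L] [Fintype Z] [Nonempty L] [Nonempty Z]
    (W : L → Z → ℝ) (hWnn : ∀ ℓ z, 0 ≤ W ℓ z) (hWsum : ∀ ℓ, ∑ z, W ℓ z = 1)
    (ρ : ℝ) (hρ0 : 0 < ρ) (hρ1 : ρ < 1) :
    ConcaveOn ℝ (stdSimplex ℝ L)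
      (fun P : L → ℝ => ∑ z, (∑ ℓ, P ℓ * W ℓ z ^ (1 / (1 - ρ))) ^ (1 - ρ)) := by
  have key : ∀ z : Z, ConcaveOn ℝ (stdSimplex ℝ L)
      (fun P : L → ℝ => (∑ ℓ, P ℓ * W ℓ z ^ (1 / (1 - ρ))) ^ (1 - ρ)) := by
    intro z
    set A : (L → ℝ) →ₗ[ℝ] ℝ :=
      { toFun := fun P => ∑ ℓ, P ℓ * W ℓ z ^ (1 / (1 - ρ))
        map_add' := by intro x y; simp [add_mul, Finset.sum_add_distrib]
        map_smul' := by intro c x; simp [Finset.mul_sum, mul_assoc] } with hA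
    have h1 := (Real.concaveOn_rpow (p := 1 - ρ) (by linarith) (by linarith)).comp_affineMap
      A.toAffineMap
    have hsub : stdSimplex ℝ L ⊆ A.toAffineMap ⁻¹' Set.Ici 0 := by
      intro P hP
      simp only [Set.mem_preimage, LinearMap.coe_toAffineMap, Set.mem_Ici, hA,
        LinearMap.coe_mk, AddHom.coe_mk]
      exact Finset.sum_nonneg fun ℓ _ => mul_nonneg (hP.1 ℓ)
        (Real.rpow_nonneg (hWnn ℓ z) _)
    exact (h1.subset hsub (convex_stdSimplex ℝ L))
  classical
  have main : ∀ s : Finset Z, ConcaveOn ℝ (stdSimplex ℝ L)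
      (fun P : L → ℝ => ∑ z ∈ s, (∑ ℓ, P ℓ * W ℓ z ^ (1 / (1 - ρ))) ^ (1 - ρ)) := by
    intro s
    induction s using Finset.induction with
    | empty => simpa using concaveOn_const (0 : ℝ) (convex_stdSimplex ℝ L)
    | insert _ _ h ih =>
      simp only [Finset.sum_insert h]
      exact (key _).add ih
  exact main Finset.univ
end

section
/- Let 𝒰, 𝒱, 𝒵 be nonempty finite sets, P_U a probability distribution on 𝒰, P_{V|U} a channel from 𝒰 to 𝒱, and W a channel from 𝒱 to 𝒵. Then the averaged Gallager function satisfies lim_{ρ → 0⁺} φ(ρ, W, P_{V|U}, P_U) / ρ = I(V;Z|U), where I(V;Z|U) = ∑_u P_U(u) ∑_{(v,z) : P_{V|U}(v|u) W(z|v) > 0} P_{V|U}(v|u) W(z|v) log( W(z|v) / (∑_{v'} P_{V|U}(v'|u) W(z|v')) ) is the conditional mutual information of the triple (U, V, Z) with joint distribution P_U(u) P_{V|U}(v|u) W(z|v). -/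
open Finset

/-- The averaged Gallager function
`φ(ρ, W, P_{V|U}, P_U) = log ∑_u P_U(u) ∑_z (∑_v P_{V|U}(v|u) W(z|v)^{1/(1-ρ)})^{1-ρ}`. -/
noncomputable def avgPhi {U V Z : Type*} [Fintype U] [Fintype V] [Fintype Z]
    (ρ : ℝ) (W : V → Z → ℝ) (PVU : U → V → ℝ) (PU : U → ℝ) : ℝ :=
  Real.log (∑ u, PU u * ∑ z, (∑ v, PVU u v * W v z ^ (1 / (1 - ρ))) ^ (1 - ρ))


-- inner term derivative
lemma aux_inner (a c : ℝ) (hc : 0 ≤ c) :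
    HasDerivAt (fun ρ : ℝ => a * c ^ (1 / (1 - ρ))) (a * (c * Real.log c)) 0 := by
  have hg : HasDerivAt (fun ρ : ℝ => 1 / (1 - ρ)) 1 0 := by
    have h1 : HasDerivAt (fun ρ : ℝ => 1 - ρ) (-1) 0 := (hasDerivAt_id 0).const_sub 1
    have := h1.fun_inv (by norm_num)
    simpa [one_div] using this
  rcases hc.lt_or_eq with hc | hc
  · have h := (hasDerivAt_const (0 : ℝ) c).rpow hg hc
    have h2 := h.const_mul a
    refine h2.congr_deriv (Eq.symm ?_)
    norm_num
  · have hev : (fun ρ : ℝ => a * c ^ (1 / (1 - ρ))) =ᶠ[nhds (0:ℝ)] (fun _ => 0) := by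
    -- c = 0 here since hc : 0 = c
      have h1 : {ρ : ℝ | ρ ≠ 1} ∈ nhds (0:ℝ) :=
        IsOpen.mem_nhds isOpen_compl_singleton (by norm_num)
      filter_upwards [h1] with ρ hρ
      rw [← hc, Real.zero_rpow (one_div_ne_zero (sub_ne_zero.mpr (Ne.symm hρ))), mul_zero]
    have := (hasDerivAt_const (0:ℝ) (0:ℝ)).congr_of_eventuallyEq hev
    simpa [← hc] using this

lemma aux_outer {V : Type*} [Fintype V] (p w : V → ℝ) (hp : ∀ v, 0 ≤ p v) (hw : ∀ v, 0 ≤ w v) :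
    HasDerivAt (fun ρ : ℝ => (∑ v, p v * w v ^ (1 / (1 - ρ))) ^ (1 - ρ))
      ((∑ v, p v * (w v * Real.log (w v))) -
        (∑ v, p v * w v) * Real.log (∑ v, p v * w v)) 0 := by
  set Q : ℝ := ∑ v, p v * w v with hQdef
  set A : ℝ := ∑ v, p v * (w v * Real.log (w v)) with hAdef
  have hS : HasDerivAt (fun ρ : ℝ => ∑ v, p v * w v ^ (1 / (1 - ρ))) A 0 := by
    rw [hAdef]
    exact HasDerivAt.fun_sum fun v _ => aux_inner (p v) (w v) (hw v)
  have hS0 : (∑ v, p v * w v ^ (1 / (1 - (0:ℝ)))) = Q := by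
    simp [hQdef]
  rcases (Finset.sum_nonneg fun v _ => mul_nonneg (hp v) (hw v) : (0:ℝ) ≤ Q).lt_or_eq
    with hQ | hQ
  · -- Q > 0
    have hpos : ∀ᶠ ρ in nhds (0:ℝ), 0 < ∑ v, p v * w v ^ (1 / (1 - ρ)) := by
      refine hS.continuousAt.eventually ?_
      show ∀ᶠ y in nhds (∑ v, p v * w v ^ (1 / (1 - (0:ℝ)))), 0 < y
      rw [hS0]
      exact eventually_gt_nhds hQ
    have hlog : HasDerivAt (fun ρ : ℝ => Real.log (∑ v, p v * w v ^ (1 / (1 - ρ))))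
        (A / Q) 0 := by
      have := hS.log (by rw [hS0]; exact hQ.ne')
      rwa [hS0] at this
    have h1 : HasDerivAt (fun ρ : ℝ => 1 - ρ) (-1) 0 := (hasDerivAt_id 0).const_sub 1
    have hg := h1.mul hlog
    have hh := hg.exp
    have hev : (fun ρ : ℝ => (∑ v, p v * w v ^ (1 / (1 - ρ))) ^ (1 - ρ)) =ᶠ[nhds (0:ℝ)]
        (fun ρ : ℝ => Real.exp ((1 - ρ) * Real.log (∑ v, p v * w v ^ (1 / (1 - ρ))))) := by
      filter_upwards [hpos] with ρ hρ
      rw [Real.rpow_def_of_pos hρ, mul_comm]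
    have := hh.congr_of_eventuallyEq hev
    refine this.congr_deriv (Eq.symm ?_)
    simp only [Pi.mul_apply]
    rw [hS0]
    rw [sub_zero, one_mul, Real.exp_log hQ]
    rw [← hQdef]
    have hQ' : Q ≠ 0 := hQ.ne'
    field_simp
    ring
  · -- Q = 0
    have hall : ∀ v ∈ (univ : Finset V), p v * w v = 0 :=
      (Finset.sum_eq_zero_iff_of_nonneg fun v _ => mul_nonneg (hp v) (hw v)).mp hQ.symm
    have hA : A = 0 := by
      refine Finset.sum_eq_zero fun v _ => ?_
      rcases mul_eq_zero.mp (hall v (mem_univ v)) with h | h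
      · rw [h, zero_mul]
      · rw [h]; simp
    have hev : (fun ρ : ℝ => (∑ v, p v * w v ^ (1 / (1 - ρ))) ^ (1 - ρ)) =ᶠ[nhds (0:ℝ)]
        (fun _ => 0) := by
      have h1 : {ρ : ℝ | ρ ≠ 1} ∈ nhds (0:ℝ) :=
        IsOpen.mem_nhds isOpen_compl_singleton (by norm_num)
      filter_upwards [h1] with ρ hρ
      have hsub : (1:ℝ) - ρ ≠ 0 := sub_ne_zero.mpr (Ne.symm hρ)
      have hSz : (∑ v, p v * w v ^ (1 / (1 - ρ))) = 0 := by
        refine Finset.sum_eq_zero fun v _ => ?_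
        rcases mul_eq_zero.mp (hall v (mem_univ v)) with h | h
        · rw [h, zero_mul]
        · rw [h, Real.zero_rpow (one_div_ne_zero hsub), mul_zero]
      rw [hSz, Real.zero_rpow hsub]
    have := (hasDerivAt_const (0:ℝ) (0:ℝ)).congr_of_eventuallyEq hev
    have hQ0 : Q = 0 := by rw [hQdef, ← hQ]
    rw [hA, hQ0]
    simpa using this

/-- As `ρ → 0⁺`, `φ(ρ, W, P_{V|U}, P_U) / ρ` tends to the conditional mutual
information `I(V;Z|U)` of the triple `(U, V, Z)` with joint distribution
`P_U(u) P_{V|U}(v|u) W(z|v)`. -/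
theorem avgPhi_div_rho_tendsto_condMutInfo
    {U V Z : Type*} [Fintype U] [Fintype V] [Fintype Z]
    [Nonempty U] [Nonempty V] [Nonempty Z]
    (PU : U → ℝ) (hPUnn : ∀ u, 0 ≤ PU u) (hPUsum : ∑ u, PU u = 1)
    (PVU : U → V → ℝ) (hPVUnn : ∀ u v, 0 ≤ PVU u v) (hPVUsum : ∀ u, ∑ v, PVU u v = 1)
    (W : V → Z → ℝ) (hWnn : ∀ v z, 0 ≤ W v z) (hWsum : ∀ v, ∑ z, W v z = 1) :
    Filter.Tendsto (fun ρ : ℝ => avgPhi ρ W PVU PU / ρ)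
      (nhdsWithin 0 (Set.Ioi 0))
      (nhds (∑ u, PU u *
        ∑ p ∈ univ.filter (fun p : V × Z => 0 < PVU u p.1 * W p.1 p.2),
          PVU u p.1 * W p.1 p.2 *
            Real.log (W p.1 p.2 / ∑ v', PVU u v' * W v' p.2))) := by
  classical
  -- notation
  set Q : U → Z → ℝ := fun u z => ∑ v, PVU u v * W v z with hQdef
  set A : U → Z → ℝ := fun u z => ∑ v, PVU u v * (W v z * Real.log (W v z)) with hAdef
  set D : ℝ := ∑ u, PU u * ∑ z, (A u z - Q u z * Real.log (Q u z)) with hDdef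
  set F : ℝ → ℝ := fun ρ => ∑ u, PU u * ∑ z, (∑ v, PVU u v * W v z ^ (1 / (1 - ρ))) ^ (1 - ρ)
    with hFdef
  -- derivative of F
  have hF : HasDerivAt F D 0 := by
    rw [hDdef]
    refine HasDerivAt.fun_sum fun u _ => ?_
    refine HasDerivAt.const_mul (PU u) ?_
    exact HasDerivAt.fun_sum fun z _ =>
      aux_outer (fun v => PVU u v) (fun v => W v z) (fun v => hPVUnn u v) (fun v => hWnn v z)
  have hF0 : F 0 = 1 := by
    have h1 : ∀ u, ∑ z, ∑ v, PVU u v * W v z = 1 := by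
      intro u
      rw [Finset.sum_comm]
      simp only [← Finset.mul_sum, hWsum, mul_one]
      exact hPVUsum u
    simp only [hFdef]
    norm_num [Real.rpow_one, h1, hPUsum]
  -- derivative of φ
  have hphi : HasDerivAt (fun ρ : ℝ => avgPhi ρ W PVU PU) D 0 := by
    have := hF.log (by rw [hF0]; norm_num)
    rw [hF0] at this
    simpa [avgPhi, hFdef] using this
  have hphi0 : avgPhi 0 W PVU PU = 0 := by
    have : avgPhi 0 W PVU PU = Real.log (F 0) := rfl
    rw [this, hF0, Real.log_one]
  -- tendsto
  have hslope := hasDerivAt_iff_tendsto_slope.mp hphi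
  have htend : Filter.Tendsto (fun ρ : ℝ => avgPhi ρ W PVU PU / ρ)
      (nhdsWithin 0 (Set.Ioi 0)) (nhds D) := by
    refine Filter.Tendsto.congr ?_
      (hslope.mono_left (nhdsWithin_mono 0 fun x hx => ne_of_gt hx))
    intro ρ
    rw [slope_def_field, hphi0, sub_zero, sub_zero]
  -- identify D with the target
  have hD : D = ∑ u, PU u *
      ∑ p ∈ univ.filter (fun p : V × Z => 0 < PVU u p.1 * W p.1 p.2),
        PVU u p.1 * W p.1 p.2 * Real.log (W p.1 p.2 / ∑ v', PVU u v' * W v' p.2) := by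
    rw [hDdef]
    refine Finset.sum_congr rfl fun u _ => ?_
    congr 1
    rw [Finset.sum_filter_of_ne (fun p _ hne => ?_)]
    swap
    · by_contra h
      have h0 : PVU u p.1 * W p.1 p.2 = 0 :=
        le_antisymm (not_lt.mp h) (mul_nonneg (hPVUnn u p.1) (hWnn p.1 p.2))
      exact hne (by rw [h0, zero_mul])
    rw [Fintype.sum_prod_type, Finset.sum_comm]
    refine (Finset.sum_congr rfl fun z _ => ?_).symm
    have hterm : ∀ v, PVU u v * W v z * Real.log (W v z / Q u z)
        = PVU u v * (W v z * Real.log (W v z)) - PVU u v * W v z * Real.log (Q u z) := by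
      intro v
      rcases (mul_nonneg (hPVUnn u v) (hWnn v z)).lt_or_eq with hpos | hzero
      · have hWv : 0 < W v z := by
          rcases (hWnn v z).lt_or_eq with h | h
          · exact h
          · rw [← h, mul_zero] at hpos; exact absurd hpos (lt_irrefl 0)
        have hQpos : 0 < Q u z := lt_of_lt_of_le hpos
          (Finset.single_le_sum (fun v _ => mul_nonneg (hPVUnn u v) (hWnn v z)) (mem_univ v))
        rw [Real.log_div hWv.ne' hQpos.ne']
        ring
      · rcases mul_eq_zero.mp hzero.symm with h | h
        · rw [h]; ring
        · rw [h]; simp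
    calc (∑ v, PVU u v * W v z * Real.log (W v z / Q u z))
        = ∑ v, (PVU u v * (W v z * Real.log (W v z)) - PVU u v * W v z * Real.log (Q u z)) :=
          Finset.sum_congr rfl fun v _ => hterm v
      _ = A u z - Q u z * Real.log (Q u z) := by
          rw [Finset.sum_sub_distrib, ← Finset.sum_mul]
  rw [← hD]
  exact htend
end

section
/- Let 𝒰, 𝒱, 𝒵 be nonempty finite sets, P_U a probability distribution on 𝒰, P_{V|U} a channel from 𝒰 to 𝒱, W a channel from 𝒱 to 𝒵, and n a positive natural number. Define the n-fold i.i.d. extensions: P_U^n on 𝒰^n by P_U^n(u) = ∏_{i<n} P_U(u_i), the channel P_{V|U}^n from 𝒰^n to 𝒱^n by P_{V|U}^n(v|u) = ∏_{i<n} P_{V|U}(v_i|u_i), and the channel W^n from 𝒱^n to 𝒵^n by W^n(z|v) = ∏_{i<n} W(z_i|v_i). Then for every ρ with 0 < ρ < 1, the averaged Gallager function is additive: φ(ρ, W^n, P_{V|U}^n, P_U^n) = n · φ(ρ, W, P_{V|U}, P_U). -/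
open Finset

set_option maxHeartbeats 1000000 in
/-- The averaged Gallager function is additive under `n`-fold i.i.d. extension:
`φ(ρ, W^n, P_{V|U}^n, P_U^n) = n · φ(ρ, W, P_{V|U}, P_U)`. -/
theorem avgPhi_iid_additive
    {U V Z : Type*} [Fintype U] [Fintype V] [Fintype Z]
    [Nonempty U] [Nonempty V] [Nonempty Z]
    (PU : U → ℝ) (hPUnn : ∀ u, 0 ≤ PU u) (hPUsum : ∑ u, PU u = 1)
    (PVU : U → V → ℝ) (hPVUnn : ∀ u v, 0 ≤ PVU u v) (hPVUsum : ∀ u, ∑ v, PVU u v = 1)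
    (W : V → Z → ℝ) (hWnn : ∀ v z, 0 ≤ W v z) (hWsum : ∀ v, ∑ z, W v z = 1)
    (n : ℕ) (hn : 0 < n)
    (ρ : ℝ) (hρ0 : 0 < ρ) (hρ1 : ρ < 1) :
    avgPhi ρ
        (fun (v : Fin n → V) (z : Fin n → Z) => ∏ i, W (v i) (z i))
        (fun (u : Fin n → U) (v : Fin n → V) => ∏ i, PVU (u i) (v i))
        (fun (u : Fin n → U) => ∏ i, PU (u i)) =
      n * avgPhi ρ W PVU PU := by
  set α : ℝ := 1 / (1 - ρ) with hα
  set β : ℝ := 1 - ρ with hβ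
  have hA : ∀ u z, 0 ≤ ∑ v, PVU u v * W v z ^ α := fun u z =>
    Finset.sum_nonneg fun v _ => mul_nonneg (hPVUnn u v) (Real.rpow_nonneg (hWnn v z) α)
  unfold avgPhi
  rw [← Real.log_pow]
  congr 1
  -- step 1: factorize innermost sum over v
  have key1 : ∀ (u : Fin n → U) (z : Fin n → Z),
      (∑ v : Fin n → V, (∏ i, PVU (u i) (v i)) * (∏ i, W (v i) (z i)) ^ α)
      = ∏ i, ∑ v, PVU (u i) v * W v (z i) ^ α := by
    intro u z
    calc (∑ v : Fin n → V, (∏ i, PVU (u i) (v i)) * (∏ i, W (v i) (z i)) ^ α)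
        = ∑ v ∈ Fintype.piFinset (fun _ : Fin n => (univ : Finset V)),
            ∏ i, PVU (u i) (v i) * W (v i) (z i) ^ α := by
          rw [Fintype.piFinset_univ]
          refine Finset.sum_congr rfl fun v _ => ?_
          rw [← Real.finset_prod_rpow _ _ (fun i _ => hWnn (v i) (z i)),
            ← Finset.prod_mul_distrib]
      _ = ∏ i, ∑ v, PVU (u i) v * W v (z i) ^ α :=
          (Finset.prod_univ_sum (fun _ : Fin n => (univ : Finset V))
            (fun i v => PVU (u i) v * W v (z i) ^ α)).symm
  have key2 : ∀ (u : Fin n → U),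
      (∑ z : Fin n → Z, (∑ v : Fin n → V, (∏ i, PVU (u i) (v i)) *
          (∏ i, W (v i) (z i)) ^ α) ^ β)
      = ∏ i, ∑ z, (∑ v, PVU (u i) v * W v z ^ α) ^ β := by
    intro u
    calc (∑ z : Fin n → Z, (∑ v : Fin n → V, (∏ i, PVU (u i) (v i)) *
          (∏ i, W (v i) (z i)) ^ α) ^ β)
        = ∑ z ∈ Fintype.piFinset (fun _ : Fin n => (univ : Finset Z)),
            ∏ i, (∑ v, PVU (u i) v * W v (z i) ^ α) ^ β := by
          rw [Fintype.piFinset_univ]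
          refine Finset.sum_congr rfl fun z _ => ?_
          rw [key1 u z, ← Real.finset_prod_rpow _ _ (fun i _ => hA (u i) (z i))]
      _ = ∏ i, ∑ z, (∑ v, PVU (u i) v * W v z ^ α) ^ β :=
          (Finset.prod_univ_sum (fun _ : Fin n => (univ : Finset Z))
            (fun i z => (∑ v, PVU (u i) v * W v z ^ α) ^ β)).symm
  calc (∑ u : Fin n → U, (∏ i, PU (u i)) * ∑ z : Fin n → Z,
          (∑ v : Fin n → V, (∏ i, PVU (u i) (v i)) * (∏ i, W (v i) (z i)) ^ α) ^ β)
      = ∑ u ∈ Fintype.piFinset (fun _ : Fin n => (univ : Finset U)),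
          ∏ i, (PU (u i) * ∑ z, (∑ v, PVU (u i) v * W v z ^ α) ^ β) := by
        rw [Fintype.piFinset_univ]
        refine Finset.sum_congr rfl fun u _ => ?_
        rw [key2 u, ← Finset.prod_mul_distrib]
    _ = ∏ _i : Fin n, ∑ u, PU u * ∑ z, (∑ v, PVU u v * W v z ^ α) ^ β :=
        (Finset.prod_univ_sum (fun _ : Fin n => (univ : Finset U))
          (fun _ u => PU u * ∑ z, (∑ v, PVU u v * W v z ^ α) ^ β)).symm
    _ = (∑ u, PU u * ∑ z, (∑ v, PVU u v * W v z ^ α) ^ β) ^ n := by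
        rw [Finset.prod_const, Finset.card_univ, Fintype.card_fin]
end

section
/- Let 𝔽 be a finite field, and let m ≥ k ≥ 1 be natural numbers. Let 𝓕 be the (nonempty) set of all surjective 𝔽-linear maps from 𝔽^m to 𝔽^k, equipped with the uniform distribution. Then 𝓕 is a two-universal family of hash functions from 𝔽^m to 𝔽^k: for all x₁ ≠ x₂ in 𝔽^m, the number of surjective linear maps f with f(x₁) = f(x₂), divided by the total number of surjective linear maps from 𝔽^m to 𝔽^k, is at most 1/|𝔽|^k. -/
/-- The set of all surjective `𝔽`-linear maps from `𝔽^m` to `𝔽^k` (with `m ≥ k ≥ 1`),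
equipped with the uniform distribution, is a two-universal family of hash functions:
for `x₁ ≠ x₂`, the fraction of surjective linear maps `f` with `f x₁ = f x₂` is at
most `1 / |𝔽|^k`. -/
theorem surjective_linear_maps_two_universal
    (𝔽 : Type*) [Field 𝔽] [Fintype 𝔽]
    (m k : ℕ) (hk : 1 ≤ k) (hkm : k ≤ m)
    (x₁ x₂ : Fin m → 𝔽) (hx : x₁ ≠ x₂) :
    (Nat.card {f : (Fin m → 𝔽) →ₗ[𝔽] (Fin k → 𝔽) //
        Function.Surjective f ∧ f x₁ = f x₂} : ℝ) /
      (Nat.card {f : (Fin m → 𝔽) →ₗ[𝔽] (Fin k → 𝔽) // Function.Surjective f} : ℝ) ≤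
      1 / ((Fintype.card 𝔽 : ℝ) ^ k) := by
  set v : Fin m → 𝔽 := x₁ - x₂ with hv
  have hv0 : v ≠ 0 := sub_ne_zero.mpr hx
  obtain ⟨i, hi⟩ : ∃ i, v i ≠ 0 := by
    by_contra h; push_neg at h; exact hv0 (funext h)
  set φ : (Fin m → 𝔽) →ₗ[𝔽] 𝔽 := (v i)⁻¹ • LinearMap.proj i with hφ
  have hφv : φ v = 1 := by simp [hφ, inv_mul_cancel₀ hi]
  -- restate the condition f x₁ = f x₂ as f v = 0
  have hcard : Nat.card {f : (Fin m → 𝔽) →ₗ[𝔽] (Fin k → 𝔽) //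
      Function.Surjective f ∧ f x₁ = f x₂} =
      Nat.card {f : (Fin m → 𝔽) →ₗ[𝔽] (Fin k → 𝔽) //
      Function.Surjective f ∧ f v = 0} := by
    apply Nat.card_congr
    apply Equiv.subtypeEquivRight
    intro f
    constructor
    · rintro ⟨hs, he⟩
      exact ⟨hs, by rw [hv, map_sub, he, sub_self]⟩
    · rintro ⟨hs, he⟩
      refine ⟨hs, ?_⟩
      rw [hv, map_sub, sub_eq_zero] at he
      exact he
  rw [hcard]
  -- finiteness
  have hfin : Finite ((Fin m → 𝔽) →ₗ[𝔽] (Fin k → 𝔽)) := by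
    exact Finite.of_injective _ (DFunLike.coe_injective (F := (Fin m → 𝔽) →ₗ[𝔽] (Fin k → 𝔽)))
  -- total count is positive: there exists a surjective linear map
  have hTpos : 0 < Nat.card {f : (Fin m → 𝔽) →ₗ[𝔽] (Fin k → 𝔽) // Function.Surjective f} := by
    rw [Nat.card_pos_iff]
    refine ⟨⟨⟨LinearMap.funLeft 𝔽 𝔽 (Fin.castLE hkm), ?_⟩⟩, inferInstance⟩
    exact LinearMap.funLeft_surjective_of_injective 𝔽 𝔽 _ (Fin.castLE_injective hkm)
  -- the injection
  have hinj : Function.Injective (fun p : (Fin k → 𝔽) ×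
      {f : (Fin m → 𝔽) →ₗ[𝔽] (Fin k → 𝔽) // Function.Surjective f ∧ f v = 0} =>
      (⟨p.2.1 + LinearMap.smulRight φ p.1, by
        intro y
        obtain ⟨x, hx'⟩ := p.2.2.1 y
        refine ⟨x - φ x • v, ?_⟩
        simp [map_sub, map_smul, p.2.2.2, hφv, hx', smul_smul]⟩ :
        {f : (Fin m → 𝔽) →ₗ[𝔽] (Fin k → 𝔽) // Function.Surjective f})) := by
    rintro ⟨w₁, f₁, hf₁⟩ ⟨w₂, f₂, hf₂⟩ h
    replace h := congrArg Subtype.val h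
    have hw : w₁ = w₂ := by
      have := congrArg (fun g => g v) h
      simpa [hf₁.2, hf₂.2, hφv] using this
    subst hw
    have hf : f₁ = f₂ := by
      have := add_right_cancel h
      exact this
    simp [hf]
  have hle := Nat.card_le_card_of_injective _ hinj
  rw [Nat.card_prod] at hle
  have hcf : Nat.card (Fin k → 𝔽) = Fintype.card 𝔽 ^ k := by
    simp [Nat.card_eq_fintype_card]
  rw [hcf] at hle
  -- now conclude with real arithmetic
  have hq : (0 : ℝ) < (Fintype.card 𝔽 : ℝ) ^ k := by
    positivity
  rw [div_le_div_iff₀ (by exact_mod_cast hTpos) hq]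
  calc (Nat.card {f : (Fin m → 𝔽) →ₗ[𝔽] (Fin k → 𝔽) //
      Function.Surjective f ∧ f v = 0} : ℝ) * (Fintype.card 𝔽 : ℝ) ^ k
      = ((Fintype.card 𝔽 ^ k * Nat.card {f : (Fin m → 𝔽) →ₗ[𝔽] (Fin k → 𝔽) //
        Function.Surjective f ∧ f v = 0} : ℕ) : ℝ) := by push_cast; ring
    _ ≤ (Nat.card {f : (Fin m → 𝔽) →ₗ[𝔽] (Fin k → 𝔽) // Function.Surjective f} : ℝ) := by
        exact_mod_cast hle
    _ = 1 * (Nat.card {f : (Fin m → 𝔽) →ₗ[𝔽] (Fin k → 𝔽) // Function.Surjective f} : ℝ) := by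
        ring
end

section
/- Let 𝒰, 𝒱, 𝒵 be nonempty finite sets and W a channel from 𝒱 to 𝒵. Let P_U, Q_U be probability distributions on 𝒰 and P_{V|U}, Q_{V|U} channels from 𝒰 to 𝒱. Suppose there are positive reals C₁, C₂ such that P_{V|U}(v|u) ≤ C₁ · Q_{V|U}(v|u) for all u with P_U(u) > 0 and all v, and P_U(u) ≤ C₂ · Q_U(u) for all u. Then for every ρ with 0 < ρ < 1, exp(φ(ρ, W, P_{V|U}, P_U)) ≤ C₁ · C₂ · exp(φ(ρ, W, Q_{V|U}, Q_U)). -/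
open Finset

private lemma exists_pos_of_sum_one {U : Type*} [Fintype U] (P : U → ℝ)
    (hnn : ∀ u, 0 ≤ P u) (hsum : ∑ u, P u = 1) : ∃ u, 0 < P u := by
  by_contra h
  push_neg at h
  have : ∑ u, P u = 0 := Finset.sum_eq_zero fun u _ => le_antisymm (h u) (hnn u)
  simp [this] at hsum

private lemma gallager_sum_pos {U V Z : Type*} [Fintype U] [Fintype V] [Fintype Z]
    (ρ : ℝ) (hρ1 : ρ < 1) (W : V → Z → ℝ) (hWnn : ∀ v z, 0 ≤ W v z)
    (hWsum : ∀ v, ∑ z, W v z = 1)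
    (PU : U → ℝ) (hPUnn : ∀ u, 0 ≤ PU u) (hPUsum : ∑ u, PU u = 1)
    (PVU : U → V → ℝ) (hPVUnn : ∀ u v, 0 ≤ PVU u v) (hPVUsum : ∀ u, ∑ v, PVU u v = 1) :
    0 < ∑ u, PU u * ∑ z, (∑ v, PVU u v * W v z ^ (1 / (1 - ρ))) ^ (1 - ρ) := by
  have hβ : 0 < 1 - ρ := by linarith
  obtain ⟨u, hu⟩ := exists_pos_of_sum_one PU hPUnn hPUsum
  obtain ⟨v, hv⟩ := exists_pos_of_sum_one (PVU u) (hPVUnn u) (hPVUsum u)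
  obtain ⟨z, hz⟩ := exists_pos_of_sum_one (W v) (hWnn v) (hWsum v)
  have hinnz : ∀ z', (0:ℝ) ≤ (∑ v', PVU u v' * W v' z' ^ (1 / (1 - ρ))) ^ (1 - ρ) := by
    intro z'
    exact Real.rpow_nonneg (Finset.sum_nonneg fun v' _ =>
      mul_nonneg (hPVUnn u v') (Real.rpow_nonneg (hWnn v' z') _)) _
  have hinner : 0 < ∑ v', PVU u v' * W v' z ^ (1 / (1 - ρ)) := by
    refine Finset.sum_pos' (fun v' _ => mul_nonneg (hPVUnn u v')
      (Real.rpow_nonneg (hWnn v' z) _)) ⟨v, Finset.mem_univ v, ?_⟩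
    exact mul_pos hv (Real.rpow_pos_of_pos hz _)
  have hT : 0 < ∑ z', (∑ v', PVU u v' * W v' z' ^ (1 / (1 - ρ))) ^ (1 - ρ) :=
    Finset.sum_pos' (fun z' _ => hinnz z') ⟨z, Finset.mem_univ z,
      Real.rpow_pos_of_pos hinner _⟩
  refine Finset.sum_pos' (fun u' _ => mul_nonneg (hPUnn u') (Finset.sum_nonneg fun z' _ =>
    Real.rpow_nonneg (Finset.sum_nonneg fun v' _ =>
      mul_nonneg (hPVUnn u' v') (Real.rpow_nonneg (hWnn v' z') _)) _))
    ⟨u, Finset.mem_univ u, mul_pos hu hT⟩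

/-- If `P_{V|U} ≤ C₁ Q_{V|U}` (on the support of `P_U`) and `P_U ≤ C₂ Q_U`, then
`exp(φ(ρ, W, P_{V|U}, P_U)) ≤ C₁ C₂ exp(φ(ρ, W, Q_{V|U}, Q_U))` for `0 < ρ < 1`. -/
theorem exp_avgPhi_le_of_le
    {U V Z : Type*} [Fintype U] [Fintype V] [Fintype Z]
    [Nonempty U] [Nonempty V] [Nonempty Z]
    (W : V → Z → ℝ) (hWnn : ∀ v z, 0 ≤ W v z) (hWsum : ∀ v, ∑ z, W v z = 1)
    (PU QU : U → ℝ)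
    (hPUnn : ∀ u, 0 ≤ PU u) (hPUsum : ∑ u, PU u = 1)
    (hQUnn : ∀ u, 0 ≤ QU u) (hQUsum : ∑ u, QU u = 1)
    (PVU QVU : U → V → ℝ)
    (hPVUnn : ∀ u v, 0 ≤ PVU u v) (hPVUsum : ∀ u, ∑ v, PVU u v = 1)
    (hQVUnn : ∀ u v, 0 ≤ QVU u v) (hQVUsum : ∀ u, ∑ v, QVU u v = 1)
    (C₁ C₂ : ℝ) (hC₁ : 0 < C₁) (hC₂ : 0 < C₂)
    (hVU : ∀ u, 0 < PU u → ∀ v, PVU u v ≤ C₁ * QVU u v)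
    (hU : ∀ u, PU u ≤ C₂ * QU u)
    (ρ : ℝ) (hρ0 : 0 < ρ) (hρ1 : ρ < 1) :
    Real.exp (avgPhi ρ W PVU PU) ≤ C₁ * C₂ * Real.exp (avgPhi ρ W QVU QU) := by
  have hβ0 : 0 < 1 - ρ := by linarith
  have hβ1 : 1 - ρ ≤ 1 := by linarith
  set α := 1 / (1 - ρ) with hα
  have hSP := gallager_sum_pos ρ hρ1 W hWnn hWsum PU hPUnn hPUsum PVU hPVUnn hPVUsum
  have hSQ := gallager_sum_pos ρ hρ1 W hWnn hWsum QU hQUnn hQUsum QVU hQVUnn hQVUsum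
  rw [avgPhi, avgPhi, Real.exp_log hSP, Real.exp_log hSQ]
  -- C₁ ≥ 1
  obtain ⟨u₀, hu₀⟩ := exists_pos_of_sum_one PU hPUnn hPUsum
  have hC₁1 : 1 ≤ C₁ := by
    have h1 : ∑ v, PVU u₀ v ≤ ∑ v, C₁ * QVU u₀ v :=
      Finset.sum_le_sum fun v _ => hVU u₀ hu₀ v
    rw [← Finset.mul_sum, hQVUsum, hPVUsum] at h1
    linarith
  have hTnn : ∀ (R : U → V → ℝ), (∀ u v, 0 ≤ R u v) → ∀ u,
      (0:ℝ) ≤ ∑ z, (∑ v, R u v * W v z ^ α) ^ (1 - ρ) := by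
    intro R hR u
    exact Finset.sum_nonneg fun z _ => Real.rpow_nonneg (Finset.sum_nonneg fun v _ =>
      mul_nonneg (hR u v) (Real.rpow_nonneg (hWnn v z) _)) _
  calc ∑ u, PU u * ∑ z, (∑ v, PVU u v * W v z ^ α) ^ (1 - ρ)
      ≤ ∑ u, C₁ * C₂ * (QU u * ∑ z, (∑ v, QVU u v * W v z ^ α) ^ (1 - ρ)) := by
        refine Finset.sum_le_sum fun u _ => ?_
        rcases eq_or_lt_of_le (hPUnn u) with h0 | hu
        · rw [← h0, zero_mul]
          exact mul_nonneg (mul_nonneg hC₁.le hC₂.le)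
            (mul_nonneg (hQUnn u) (hTnn QVU hQVUnn u))
        · have hTPQ : ∑ z, (∑ v, PVU u v * W v z ^ α) ^ (1 - ρ)
              ≤ C₁ * ∑ z, (∑ v, QVU u v * W v z ^ α) ^ (1 - ρ) := by
            rw [Finset.mul_sum]
            refine Finset.sum_le_sum fun z _ => ?_
            have hQnn : 0 ≤ ∑ v, QVU u v * W v z ^ α :=
              Finset.sum_nonneg fun v _ =>
                mul_nonneg (hQVUnn u v) (Real.rpow_nonneg (hWnn v z) _)
            have hle : ∑ v, PVU u v * W v z ^ α ≤ C₁ * ∑ v, QVU u v * W v z ^ α := by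
              rw [Finset.mul_sum]
              refine Finset.sum_le_sum fun v _ => ?_
              rw [← mul_assoc]
              exact mul_le_mul_of_nonneg_right (hVU u hu v)
                (Real.rpow_nonneg (hWnn v z) _)
            calc (∑ v, PVU u v * W v z ^ α) ^ (1 - ρ)
                ≤ (C₁ * ∑ v, QVU u v * W v z ^ α) ^ (1 - ρ) :=
                  Real.rpow_le_rpow (Finset.sum_nonneg fun v _ =>
                    mul_nonneg (hPVUnn u v) (Real.rpow_nonneg (hWnn v z) _))
                    hle hβ0.le
              _ = C₁ ^ (1 - ρ) * (∑ v, QVU u v * W v z ^ α) ^ (1 - ρ) :=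
                  Real.mul_rpow hC₁.le hQnn
              _ ≤ C₁ * (∑ v, QVU u v * W v z ^ α) ^ (1 - ρ) := by
                  refine mul_le_mul_of_nonneg_right ?_ (Real.rpow_nonneg hQnn _)
                  calc C₁ ^ (1 - ρ) ≤ C₁ ^ (1:ℝ) :=
                        Real.rpow_le_rpow_of_exponent_le hC₁1 hβ1
                    _ = C₁ := Real.rpow_one C₁
          calc PU u * ∑ z, (∑ v, PVU u v * W v z ^ α) ^ (1 - ρ)
              ≤ (C₂ * QU u) * (C₁ * ∑ z, (∑ v, QVU u v * W v z ^ α) ^ (1 - ρ)) :=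
                mul_le_mul (hU u) hTPQ (hTnn PVU hPVUnn u) (le_trans hu.le (hU u))
            _ = C₁ * C₂ * (QU u * ∑ z, (∑ v, QVU u v * W v z ^ α) ^ (1 - ρ)) := by ring
    _ = C₁ * C₂ * ∑ u, QU u * ∑ z, (∑ v, QVU u v * W v z ^ α) ^ (1 - ρ) := by
        rw [Finset.mul_sum]
end
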